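/- arXiv:2310.01000 — 4 statements merged into one kernel-verified Lean document; each statement's English description precedes it below -/
import Mathlib

section
/- For every finite safe Petri net N₀ there exists an unfolding unf(N₀): a branching process of N₀ that is maximal with respect to the subprocess relation ≤, i.e. every branching process B of N₀ satisfies B ≤ unf(N₀); moreover any two such maximal branching processes of N₀ are isomorphic. -/
namespace PG

/-- A (pre-)Petri net: places `P`, transitions `T`, flow maps and an initial marking.
Markings are sets of places (the nets considered are safe). -/
structure PreNet (P T : Type) : Type where
  pre : T → Set P
  post : T → Set P
  init : Set P

namespace PreNet

variable {P T : Type}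

/-- A transition is enabled at a marking if its preset is contained in it. -/
def enabled (N : PreNet P T) (M : Set P) (t : T) : Prop := N.pre t ⊆ M

/-- Firing a transition. -/
def fire (N : PreNet P T) (M : Set P) (t : T) : Set P := (M \ N.pre t) ∪ N.post t

/-- `Fires N M l M'` : firing the sequence `l` of (successively enabled) transitions
from `M` yields `M'`. -/
inductive Fires (N : PreNet P T) : Set P → List T → Set P → Prop
  | nil (M : Set P) : Fires N M [] M
  | cons {M M' : Set P} {t : T} {l : List T} :
      N.enabled M t → Fires N (N.fire M t) l M' → Fires N M (t :: l) M'

/-- Reachable markings. -/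
def reachable (N : PreNet P T) (M : Set P) : Prop := ∃ l : List T, N.Fires N.init l M

/-- Safety: firing never puts a token on an already occupied place, so markings
may be taken as sets of places. -/
def Safe (N : PreNet P T) : Prop :=
  ∀ M, N.reachable M → ∀ t, N.enabled M t → (M \ N.pre t) ∩ N.post t = ∅

/-- The flow relation on nodes. -/
def flow (N : PreNet P T) : P ⊕ T → P ⊕ T → Prop
  | Sum.inl p, Sum.inr t => p ∈ N.pre t
  | Sum.inr t, Sum.inl p => p ∈ N.post t
  | _, _ => False

/-- Causal order: `x ≤ y` iff `x F⁺ y` or `x = y`. -/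
def le (N : PreNet P T) : P ⊕ T → P ⊕ T → Prop := Relation.ReflTransGen N.flow

/-- Strict causal order `x F⁺ y`. -/
def lt (N : PreNet P T) : P ⊕ T → P ⊕ T → Prop := Relation.TransGen N.flow

/-- Conflict of two nodes. -/
def conflict (N : PreNet P T) (x y : P ⊕ T) : Prop :=
  ∃ t₁ t₂ : T, t₁ ≠ t₂ ∧ (N.pre t₁ ∩ N.pre t₂).Nonempty ∧
    N.le (Sum.inr t₁) x ∧ N.le (Sum.inr t₂) y

/-- Concurrency of two nodes: neither causally related nor in conflict. -/
def concurrent (N : PreNet P T) (x y : P ⊕ T) : Prop :=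
  ¬ N.le x y ∧ ¬ N.le y x ∧ ¬ N.conflict x y

end PreNet

/-- Well-formedness of a Petri net: presets nonempty and finite, postsets finite. -/
structure IsPetriNet {P T : Type} (N : PreNet P T) : Prop where
  pre_nonempty : ∀ t, (N.pre t).Nonempty
  pre_finite : ∀ t, (N.pre t).Finite
  post_finite : ∀ t, (N.post t).Finite

/-- Occurrence net. -/
structure IsOccurrenceNet {P T : Type} (N : PreNet P T) : Prop where
  toIsPetriNet : IsPetriNet N
  acyclic : ∀ x, ¬ N.lt x x
  finitely_preceded : ∀ x, {y | N.le y x}.Finite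
  place_pre_subsingleton : ∀ p : P, {t : T | p ∈ N.post t}.Subsingleton
  no_self_conflict : ∀ t : T, ¬ N.conflict (Sum.inr t) (Sum.inr t)
  init_eq : N.init = {p | ∀ t, p ∉ N.post t}

/-- Net homomorphism: preserves presets, postsets and the initial marking bijectively. -/
structure IsNetHom {P₁ T₁ P₂ T₂ : Type} (N₁ : PreNet P₁ T₁) (N₂ : PreNet P₂ T₂)
    (fp : P₁ → P₂) (ft : T₁ → T₂) : Prop where
  pre_bij : ∀ t, Set.BijOn fp (N₁.pre t) (N₂.pre (ft t))
  post_bij : ∀ t, Set.BijOn fp (N₁.post t) (N₂.post (ft t))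
  init_bij : Set.BijOn fp N₁.init N₂.init

/-- `(N, (fp, ft))` is a branching process of `N₀`. -/
structure IsBranchingProcess {P₀ T₀ P T : Type} (N₀ : PreNet P₀ T₀)
    (N : PreNet P T) (fp : P → P₀) (ft : T → T₀) : Prop where
  occ : IsOccurrenceNet N
  hom : IsNetHom N N₀ fp ft
  unique : ∀ t₁ t₂ : T, N.pre t₁ = N.pre t₂ → ft t₁ = ft t₂ → t₁ = t₂

/-- The subprocess relation `B₁ ≤ B₂` between branching processes of the same net:
existence of an injective homomorphism commuting with the projections. -/
def BPle {P₀ T₀ P₁ T₁ P₂ T₂ : Type} (N₁ : PreNet P₁ T₁) (fp₁ : P₁ → P₀) (ft₁ : T₁ → T₀)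
    (N₂ : PreNet P₂ T₂) (fp₂ : P₂ → P₀) (ft₂ : T₂ → T₀) : Prop :=
  ∃ (gp : P₁ → P₂) (gt : T₁ → T₂),
    IsNetHom N₁ N₂ gp gt ∧ fp₂ ∘ gp = fp₁ ∧ ft₂ ∘ gt = ft₁ ∧
    Function.Injective gp ∧ Function.Injective gt

/-- Isomorphism `B₁ ≅ B₂` of branching processes: a bijective homomorphism
commuting with the projections. -/
def BPEquiv {P₀ T₀ P₁ T₁ P₂ T₂ : Type} (N₁ : PreNet P₁ T₁) (fp₁ : P₁ → P₀) (ft₁ : T₁ → T₀)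
    (N₂ : PreNet P₂ T₂) (fp₂ : P₂ → P₀) (ft₂ : T₂ → T₀) : Prop :=
  ∃ (gp : P₁ → P₂) (gt : T₁ → T₂),
    IsNetHom N₁ N₂ gp gt ∧ fp₂ ∘ gp = fp₁ ∧ ft₂ ∘ gt = ft₁ ∧
    Function.Bijective gp ∧ Function.Bijective gt

section Future

variable {P T : Type}

/-- Nodes of the future of a cut `C`: every place of `C` is a causal predecessor
of, or concurrent to, the node. -/
def futNode (N : PreNet P T) (C : Set P) (x : P ⊕ T) : Prop :=
  ∀ p ∈ C, N.le (Sum.inl p) x ∨ N.concurrent (Sum.inl p) x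

abbrev FutP (N : PreNet P T) (C : Set P) : Type := {p : P // futNode N C (Sum.inl p)}
abbrev FutT (N : PreNet P T) (C : Set P) : Type := {t : T // futNode N C (Sum.inr t)}

/-- The future `Fut(B, C)` of a cut `C`: nodes as above, flow maps restricted,
initial marking `C`. -/
def futNet (N : PreNet P T) (C : Set P) : PreNet (FutP N C) (FutT N C) where
  pre t := {p | p.1 ∈ N.pre t.1}
  post t := {p | p.1 ∈ N.post t.1}
  init := {p | p.1 ∈ C}

end Future

section Lkc

variable {P T P₀ T₀ : Type}

/-- The last known cut `lkc(t)` of a transition. -/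
def lkc (N : PreNet P T) (t : T) : Set P :=
  {p | ¬ N.lt (Sum.inl p) (Sum.inr t) ∧
    ∀ t' : T, p ∈ N.post t' → N.le (Sum.inr t') (Sum.inr t)}

/-- The last known marking `lkm(t) = π(lkc(t))`. -/
def lkm (N : PreNet P T) (fp : P → P₀) (t : T) : Set P₀ := fp '' lkc N t

/-- Partial repetition cuts `prc(t₁, t₂)`. -/
def prc (N : PreNet P T) (fp : P → P₀) (t₁ t₂ : T) : Prop :=
  lkm N fp t₁ = lkm N fp t₂ ∧ lkc N t₁ \ N.post t₁ = lkc N t₂ \ N.post t₂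

/-- A loop of partial repetition cuts: `prc(t₁, t₂)` with `t₁ < t₂`. -/
def prcLoop (N : PreNet P T) (fp : P → P₀) (t₁ t₂ : T) : Prop :=
  prc N fp t₁ t₂ ∧ N.lt (Sum.inr t₁) (Sum.inr t₂)

end Lkc

section Glue

variable {P T P₀ T₀ : Type}

/-- Places of the cut-and-glued process `B - Fut(B,C₂) + Fut(B,C₁)'`:
left places are those of `B` outside `Fut(B,C₂)` (keeping `C₂`), right places
are the fresh copies of the places of `Fut(B,C₁)` other than its initial marking. -/
def gluedPProp (N : PreNet P T) (C₁ C₂ : Set P) : P ⊕ P → Prop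
  | Sum.inl p => ¬ futNode N C₂ (Sum.inl p) ∨ p ∈ C₂
  | Sum.inr p => futNode N C₁ (Sum.inl p) ∧ p ∉ C₁

/-- Transitions of the cut-and-glued process. -/
def gluedTProp (N : PreNet P T) (C₁ C₂ : Set P) : T ⊕ T → Prop
  | Sum.inl t => ¬ futNode N C₂ (Sum.inr t)
  | Sum.inr t => futNode N C₁ (Sum.inr t)

abbrev GluedP (N : PreNet P T) (C₁ C₂ : Set P) : Type := {x : P ⊕ P // gluedPProp N C₁ C₂ x}
abbrev GluedT (N : PreNet P T) (C₁ C₂ : Set P) : Type := {x : T ⊕ T // gluedTProp N C₁ C₂ x}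

/-- The cut-and-glued object `B_{C₁ → C₂} = B - Fut(B, C₂) + Fut(B, C₁)'`,
where the copy of `Fut(B, C₁)` is glued along `C₂` via the identification
`e : C₂ → C₁`. -/
def gluedNet (N : PreNet P T) (C₁ C₂ : Set P) (e : P → P) :
    PreNet (GluedP N C₁ C₂) (GluedT N C₁ C₂) where
  pre t :=
    match t.1 with
    | Sum.inl t' => {x | ∃ q ∈ N.pre t', x.1 = Sum.inl q}
    | Sum.inr t' => {x | ∃ q ∈ N.pre t',
        (q ∉ C₁ ∧ x.1 = Sum.inr q) ∨ (q ∈ C₁ ∧ ∃ p ∈ C₂, e p = q ∧ x.1 = Sum.inl p)}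
  post t :=
    match t.1 with
    | Sum.inl t' => {x | ∃ q ∈ N.post t', x.1 = Sum.inl q}
    | Sum.inr t' => {x | ∃ q ∈ N.post t',
        (q ∉ C₁ ∧ x.1 = Sum.inr q) ∨ (q ∈ C₁ ∧ ∃ p ∈ C₂, e p = q ∧ x.1 = Sum.inl p)}
  init := {x | ∃ q ∈ N.init, x.1 = Sum.inl q}

/-- Projection of the glued process to the original underlying net (places). -/
def gluedFp {N : PreNet P T} {C₁ C₂ : Set P} (fp : P → P₀) (x : GluedP N C₁ C₂) : P₀ :=
  Sum.elim fp fp x.1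

/-- Projection of the glued process to the original underlying net (transitions). -/
def gluedFt {N : PreNet P T} {C₁ C₂ : Set P} (ft : T → T₀) (x : GluedT N C₁ C₂) : T₀ :=
  Sum.elim ft ft x.1

end Glue

section Game

/-- A Petri game: an underlying net whose places are partitioned into system
places (`system`) and environment places (the rest), plus a set of bad markings. -/
structure PetriGame (P₀ T₀ : Type) : Type where
  net : PreNet P₀ T₀
  system : Set P₀
  bad : Set (Set P₀)

variable {P₀ T₀ P T : Type}

/-- Winning strategy of a Petri game: a branching process of the underlying net
satisfying justified refusal, (global) safety, determinism and deadlock avoidance. -/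
structure IsWinningStrategy (G : PetriGame P₀ T₀) (N : PreNet P T)
    (fp : P → P₀) (ft : T → T₀) : Prop where
  isBP : IsBranchingProcess G.net N fp ft
  justified_refusal : ∀ C : Set P,
    C.Pairwise (fun x y => N.concurrent (Sum.inl x) (Sum.inl y)) →
    ∀ t₀ : T₀, fp '' C = G.net.pre t₀ →
    (¬ ∃ t : T, ft t = t₀ ∧ N.pre t = C) →
    ∃ p ∈ C, fp p ∈ G.system ∧ t₀ ∉ ft '' {t : T | p ∈ N.pre t}
  safety : ∀ M, N.reachable M → fp '' M ∉ G.bad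
  determinism : ∀ p : P, fp p ∈ G.system → ∀ M, N.reachable M → p ∈ M →
    {t : T | p ∈ N.pre t ∧ N.enabled M t}.Subsingleton
  deadlock_avoiding : ∀ M, N.reachable M →
    (∃ t₀ : T₀, G.net.enabled (fp '' M) t₀) → ∃ t : T, N.enabled M t

/-- The synthesis problem: existence of a winning strategy. -/
def HasWinningStrategy (G : PetriGame P₀ T₀) : Prop :=
  ∃ (P T : Type) (N : PreNet P T) (fp : P → P₀) (ft : T → T₀),
    IsWinningStrategy G N fp ft

/-- `K`-player Petri game: every reachable marking has at most `K` tokens. -/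
def PetriGame.IsKPlayer (G : PetriGame P₀ T₀) (K : ℕ) : Prop :=
  ∀ M, G.net.reachable M → M.Finite ∧ M.ncard ≤ K

end Game

section Seg

variable {P₀ T₀ P T : Type}

/-- A maximally repeated strategy: partial repetition cuts have isomorphic futures. -/
def MaximallyRepeated (N : PreNet P T) (fp : P → P₀) (ft : T → T₀) : Prop :=
  ∀ t₁ t₂ : T, prc N fp t₁ t₂ →
    BPEquiv (futNet N (lkc N t₁)) (fun p => fp p.1) (fun s => ft s.1)
            (futNet N (lkc N t₂)) (fun p => fp p.1) (fun s => ft s.1)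

/-- Conditions (1) and (2) of a synchronisation segment of `t`:
`S ≤ Fut(B, lkc(t))` and every transition of the future not belonging to `S`
either has all places of its preset causal successors of `t`, or is a partial
repetition of a transition inside a loop of `S`. -/
def SegCond (N₀ : PreNet P₀ T₀) (N : PreNet P T) (fp : P → P₀) (ft : T → T₀) (t : T)
    {Ps Ts : Type} (S : PreNet Ps Ts) (fps : Ps → P₀) (fts : Ts → T₀) : Prop :=
  IsBranchingProcess { N₀ with init := lkm N fp t } S fps fts ∧
  ∃ (gp : Ps → FutP N (lkc N t)) (gt : Ts → FutT N (lkc N t)),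
    IsNetHom S (futNet N (lkc N t)) gp gt ∧
    (∀ p, fp (gp p).1 = fps p) ∧ (∀ s, ft (gt s).1 = fts s) ∧
    Function.Injective gp ∧ Function.Injective gt ∧
    ∀ t' : FutT N (lkc N t), t' ∉ Set.range gt →
      (∀ q ∈ N.pre t'.1, N.le (Sum.inr t) (Sum.inl q)) ∨
      (∃ s₁ s₂ s₃ : Ts, prcLoop N fp (gt s₁).1 (gt s₂).1 ∧
        N.le (Sum.inr (gt s₃).1) (Sum.inr (gt s₂).1) ∧ prc N fp t'.1 (gt s₃).1)

/-- `S` is a synchronisation segment `Seg(t)`: a smallest branching process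
(w.r.t. the subprocess relation) satisfying the segment conditions. -/
def IsSyncSegment (N₀ : PreNet P₀ T₀) (N : PreNet P T) (fp : P → P₀) (ft : T → T₀) (t : T)
    {Ps Ts : Type} (S : PreNet Ps Ts) (fps : Ps → P₀) (fts : Ts → T₀) : Prop :=
  SegCond N₀ N fp ft t S fps fts ∧
  ∀ (Ps' Ts' : Type) (S' : PreNet Ps' Ts') (fps' : Ps' → P₀) (fts' : Ts' → T₀),
    SegCond N₀ N fp ft t S' fps' fts' → BPle S fps fts S' fps' fts'

end Seg

end PG

namespace PG


section OccLemmas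

variable {P T : Type} {N : PreNet P T}

lemma le_of_flow_le {x y z : P ⊕ T} (h1 : N.flow x y) (h2 : N.le y z) : N.le x z :=
  Relation.ReflTransGen.head h1 h2

lemma lt_of_le_flow {x y z : P ⊕ T} (h1 : N.le x y) (h2 : N.flow y z) : N.lt x z :=
  Relation.TransGen.tail' h1 h2

/-- In an acyclic, finitely preceded net the flow relation is well-founded. -/
lemma flow_wf (hac : ∀ x, ¬ N.lt x x) (hfin : ∀ x, {y | N.le y x}.Finite) :
    WellFounded N.flow := by
  constructor
  intro x
  have key : ∀ n (x : P ⊕ T), ({y | N.le y x}).ncard ≤ n → Acc N.flow x := by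
    intro n
    induction n using Nat.strong_induction_on with
    | _ n ih =>
      intro x hx
      constructor
      intro y hy
      have hsub : {z | N.le z y} ⊂ {z | N.le z x} := by
        constructor
        · intro z hz
          exact Relation.ReflTransGen.tail hz hy
        · intro hcon
          have : N.le x x := Relation.ReflTransGen.refl
          have hxy : N.le x y := hcon this
          exact hac x (lt_of_le_flow hxy hy)
      have hlt : ({z | N.le z y}).ncard < ({z | N.le z x}).ncard :=
        Set.ncard_lt_ncard hsub (hfin x)
      exact ih _ (lt_of_lt_of_le hlt hx) y le_rfl
  exact key _ x le_rfl

lemma exists_post_of_not_init (hocc : IsOccurrenceNet N) {p : P} (hp : p ∉ N.init) :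
    ∃ t, p ∈ N.post t := by
  rw [hocc.init_eq] at hp
  simpa using hp

/-- Distinct places in the preset of a transition of an occurrence net are concurrent. -/
lemma preset_concurrent (hocc : IsOccurrenceNet N) {t : T} {q q' : P}
    (hq : q ∈ N.pre t) (hq' : q' ∈ N.pre t) (hne : q ≠ q') :
    N.concurrent (Sum.inl q) (Sum.inl q') := by
  have main : ∀ a b : P, a ∈ N.pre t → b ∈ N.pre t → a ≠ b →
      ¬ N.le (Sum.inl a) (Sum.inl b) := by
    intro a b ha hb hab hle
    rcases hle.cases_head with h | ⟨z, hz1, hz2⟩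
    · exact hab (by injection h)
    · match z, hz1 with
      | Sum.inr t', hz1 =>
        by_cases htt : t' = t
        · subst htt
          exact hocc.acyclic _ (lt_of_le_flow hz2 (show N.flow (Sum.inl b) (Sum.inr t') from hb))
        · refine hocc.no_self_conflict t ⟨t', t, htt, ⟨a, hz1, ha⟩, ?_, Relation.ReflTransGen.refl⟩
          exact Relation.ReflTransGen.tail hz2 (show N.flow (Sum.inl b) (Sum.inr t) from hb)
  refine ⟨main q q' hq hq' hne, main q' q hq' hq hne.symm, ?_⟩
  rintro ⟨t₁, t₂, hne12, hsh, h1, h2⟩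
  exact hocc.no_self_conflict t ⟨t₁, t₂, hne12, hsh,
    Relation.ReflTransGen.tail h1 (show N.flow (Sum.inl q) (Sum.inr t) from hq),
    Relation.ReflTransGen.tail h2 (show N.flow (Sum.inl q') (Sum.inr t) from hq')⟩

end OccLemmas


section UnfConstruction

variable {P₀ T₀ : Type}

/-- Syntax of events of the canonical unfolding. -/
inductive Ev (P₀ T₀ : Type) : Type where
  | mk : List (Option (Ev P₀ T₀) × P₀) → T₀ → Ev P₀ T₀

/-- Conditions of the canonical unfolding. -/
abbrev Cond (P₀ T₀ : Type) : Type := Option (Ev P₀ T₀) × P₀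

/-- The preset list of an event. -/
def Ev.preList : Ev P₀ T₀ → List (Cond P₀ T₀)
  | .mk l _ => l

/-- The transition label of an event. -/
def Ev.t0 : Ev P₀ T₀ → T₀
  | .mk _ t => t

/-- The raw (untrimmed) net of all syntactic conditions and events. -/
def raw (N₀ : PreNet P₀ T₀) : PreNet (Cond P₀ T₀) (Ev P₀ T₀) where
  pre e := {c | c ∈ e.preList}
  post e := {c | c.1 = some e ∧ c.2 ∈ N₀.post e.t0}
  init := {c | c.1 = none ∧ c.2 ∈ N₀.init}

instance evSetoid : Setoid (Ev P₀ T₀) where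
  r e e' := {c | c ∈ e.preList} = {c | c ∈ e'.preList} ∧ e.t0 = e'.t0
  iseqv := ⟨fun _ => ⟨rfl, rfl⟩, fun h => ⟨h.1.symm, h.2.symm⟩,
    fun h h' => ⟨h.1.trans h'.1, h.2.trans h'.2⟩⟩

/-- Canonical representative of an event's equivalence class. -/
noncomputable def canon (e : Ev P₀ T₀) : Ev P₀ T₀ :=
  Quotient.out (Quotient.mk evSetoid e)

lemma canon_rel (e : Ev P₀ T₀) :
    ({c | c ∈ (canon e).preList} = {c | c ∈ e.preList}) ∧ (canon e).t0 = e.t0 :=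
  Quotient.exact (Quotient.out_eq (Quotient.mk evSetoid e))

lemma canon_canon (e : Ev P₀ T₀) : canon (canon e) = canon e := by
  unfold canon
  rw [Quotient.out_eq (Quotient.mk evSetoid e)]

lemma canon_eq_of_rel {e e' : Ev P₀ T₀} (h1 : {c | c ∈ e.preList} = {c | c ∈ e'.preList})
    (h2 : e.t0 = e'.t0) : canon e = canon e' := by
  unfold canon
  congr 1
  exact Quotient.sound ⟨h1, h2⟩

/-- Size measure on nodes of the raw net. -/
noncomputable def msz : Cond P₀ T₀ ⊕ Ev P₀ T₀ → ℕ
  | Sum.inl c => sizeOf c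
  | Sum.inr e => sizeOf e

lemma msz_flow {N₀ : PreNet P₀ T₀} {x y : Cond P₀ T₀ ⊕ Ev P₀ T₀}
    (h : (raw N₀).flow x y) : msz x < msz y := by
  match x, y, h with
  | Sum.inl c, Sum.inr e, h =>
    have hc : c ∈ e.preList := h
    match e with
    | .mk l t =>
      have := List.sizeOf_lt_of_mem hc
      simp only [msz, Ev.mk.sizeOf_spec]
      simp only [Ev.preList] at this
      omega
  | Sum.inr e, Sum.inl c, h =>
    have hc : c.1 = some e := h.1
    match c with
    | (o, p) =>
      simp only at hc
      subst hc
      simp only [msz, Prod.mk.sizeOf_spec, Option.some.sizeOf_spec]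
      omega

lemma msz_lt {N₀ : PreNet P₀ T₀} {x y : Cond P₀ T₀ ⊕ Ev P₀ T₀}
    (h : (raw N₀).lt x y) : msz x < msz y := by
  induction h with
  | single h => exact msz_flow h
  | tail _ h ih => exact ih.trans (msz_flow h)

lemma raw_acyclic (N₀ : PreNet P₀ T₀) : ∀ x, ¬ (raw N₀).lt x x :=
  fun _ h => absurd (msz_lt h) (lt_irrefl _)

lemma msz_le {N₀ : PreNet P₀ T₀} {x y : Cond P₀ T₀ ⊕ Ev P₀ T₀}
    (h : (raw N₀).le x y) : msz x ≤ msz y := by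
  rcases (Relation.reflTransGen_iff_eq_or_transGen.mp h) with rfl | h
  · exact le_rfl
  · exact (msz_lt h).le

lemma raw_ipred_finite (N₀ : PreNet P₀ T₀) (x : Cond P₀ T₀ ⊕ Ev P₀ T₀) :
    {y | (raw N₀).flow y x}.Finite := by
  match x with
  | Sum.inl c =>
    match c with
    | (none, p) =>
      apply Set.Finite.subset (Set.finite_empty)
      rintro (y | y) hy
      · exact hy.elim
      · exact (Option.some_ne_none _ hy.1.symm).elim
    | (some e, p) =>
      apply Set.Finite.subset (Set.finite_singleton (Sum.inr e))
      rintro (y | y) hy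
      · exact hy.elim
      · have : some e = some y := hy.1
        simp [Option.some_inj.mp this]
  | Sum.inr e =>
    apply Set.Finite.subset ((e.preList.finite_toSet).image Sum.inl)
    rintro (y | y) hy
    · exact ⟨y, hy, rfl⟩
    · exact absurd hy (by simp [raw, PreNet.flow])

lemma raw_preds_finite (N₀ : PreNet P₀ T₀) (x : Cond P₀ T₀ ⊕ Ev P₀ T₀) :
    {y | (raw N₀).le y x}.Finite := by
  have key : ∀ n (x : Cond P₀ T₀ ⊕ Ev P₀ T₀), msz x ≤ n → {y | (raw N₀).le y x}.Finite := by
    intro n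
    induction n using Nat.strong_induction_on with
    | _ n ih =>
      intro x hx
      have : {y | (raw N₀).le y x} ⊆
          {x} ∪ ⋃ z ∈ {z | (raw N₀).flow z x}, {y | (raw N₀).le y z} := by
        intro y hy
        rcases Relation.ReflTransGen.cases_tail hy with h | ⟨z, hz1, hz2⟩
        · exact Or.inl h.symm
        · exact Or.inr (Set.mem_biUnion hz2 hz1)
      refine Set.Finite.subset (Set.Finite.union (Set.finite_singleton x)
        (Set.Finite.biUnion (raw_ipred_finite N₀ x) ?_)) this
      intro z hz
      exact ih (msz z) (lt_of_lt_of_le (msz_flow hz) hx) z le_rfl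
  exact key _ x le_rfl

end UnfConstruction


section UnfNet

variable {P₀ T₀ : Type}

/-- Well-formed nodes of the raw net. -/
inductive WF (N₀ : PreNet P₀ T₀) : Cond P₀ T₀ ⊕ Ev P₀ T₀ → Prop where
  | init : ∀ p, p ∈ N₀.init → WF N₀ (Sum.inl (none, p))
  | post : ∀ e p, WF N₀ (Sum.inr e) → p ∈ N₀.post e.t0 → WF N₀ (Sum.inl (some e, p))
  | ev : ∀ e : Ev P₀ T₀, (∀ c ∈ e.preList, WF N₀ (Sum.inl c)) →
      Set.BijOn Prod.snd {c | c ∈ e.preList} (N₀.pre e.t0) →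
      Set.Pairwise {c | c ∈ e.preList}
        (fun c c' => (raw N₀).concurrent (Sum.inl c) (Sum.inl c')) →
      canon e = e →
      WF N₀ (Sum.inr e)

variable {N₀ : PreNet P₀ T₀}

lemma WF.of_flow {x y : Cond P₀ T₀ ⊕ Ev P₀ T₀} (hy : WF N₀ y) (hf : (raw N₀).flow x y) :
    WF N₀ x := by
  match x, y, hf with
  | Sum.inl c, Sum.inr e, hf =>
    cases hy with
    | ev e h1 h2 h3 h4 => exact h1 c hf
  | Sum.inr e, Sum.inl c, hf =>
    have hc : c.1 = some e := hf.1
    match c, hc with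
    | (some e', p), hc =>
      cases Option.some_inj.mp hc
      cases hy with
      | post e p he hp => exact he

lemma WF.of_le {x y : Cond P₀ T₀ ⊕ Ev P₀ T₀} (hy : WF N₀ y) (hle : (raw N₀).le x y) :
    WF N₀ x := by
  induction hle using Relation.ReflTransGen.head_induction_on with
  | refl => exact hy
  | head hf _ ih => exact (ih).of_flow hf

abbrev UP (N₀ : PreNet P₀ T₀) : Type := {c : Cond P₀ T₀ // WF N₀ (Sum.inl c)}
abbrev UT (N₀ : PreNet P₀ T₀) : Type := {e : Ev P₀ T₀ // WF N₀ (Sum.inr e)}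

/-- The canonical unfolding net. -/
def UNet (N₀ : PreNet P₀ T₀) : PreNet (UP N₀) (UT N₀) where
  pre t := {c | c.1 ∈ (raw N₀).pre t.1}
  post t := {c | c.1 ∈ (raw N₀).post t.1}
  init := {c | c.1.1 = none}

/-- Projections. -/
def fpU : UP N₀ → P₀ := fun c => c.1.2
def ftU : UT N₀ → T₀ := fun t => t.1.t0

def nmap : UP N₀ ⊕ UT N₀ → Cond P₀ T₀ ⊕ Ev P₀ T₀ :=
  Sum.map Subtype.val Subtype.val

lemma nmap_injective : Function.Injective (nmap (N₀ := N₀)) := by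
  rintro (x | x) (y | y) h <;> simp only [nmap, Sum.map] at h
  · exact congrArg Sum.inl (Subtype.ext (Sum.inl.inj h))
  · exact absurd h (by simp)
  · exact absurd h (by simp)
  · exact congrArg Sum.inr (Subtype.ext (Sum.inr.inj h))

lemma wf_nmap (x : UP N₀ ⊕ UT N₀) : WF N₀ (nmap x) := by
  rcases x with x | x
  · exact x.2
  · exact x.2

lemma flow_map {x y : UP N₀ ⊕ UT N₀} (h : (UNet N₀).flow x y) :
    (raw N₀).flow (nmap x) (nmap y) := by
  rcases x with x | x <;> rcases y with y | y <;>
    simp only [UNet, PreNet.flow, nmap, Sum.map] at h ⊢ <;> exact h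

lemma flow_lift {x y : UP N₀ ⊕ UT N₀} (h : (raw N₀).flow (nmap x) (nmap y)) :
    (UNet N₀).flow x y := by
  rcases x with x | x <;> rcases y with y | y <;>
    simp only [UNet, PreNet.flow, nmap, Sum.map] at h ⊢ <;> exact h

lemma le_map {x y : UP N₀ ⊕ UT N₀} (h : (UNet N₀).le x y) :
    (raw N₀).le (nmap x) (nmap y) := by
  induction h with
  | refl => exact Relation.ReflTransGen.refl
  | tail _ hf ih => exact Relation.ReflTransGen.tail ih (flow_map hf)

lemma lt_map {x y : UP N₀ ⊕ UT N₀} (h : (UNet N₀).lt x y) :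
    (raw N₀).lt (nmap x) (nmap y) := by
  induction h with
  | single h => exact Relation.TransGen.single (flow_map h)
  | tail _ hf ih => exact Relation.TransGen.tail ih (flow_map hf)

lemma le_lift : ∀ {z y : Cond P₀ T₀ ⊕ Ev P₀ T₀}, (raw N₀).le z y →
    ∀ (hz : WF N₀ z) (hy : WF N₀ y) (x x' : UP N₀ ⊕ UT N₀),
    nmap x = z → nmap x' = y → (UNet N₀).le x x' := by
  intro z y h
  induction h with
  | refl =>
    intro hz hy x x' hx hx'
    cases nmap_injective (hx.trans hx'.symm)
    exact Relation.ReflTransGen.refl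
  | @tail b c hzb hbc ih =>
    intro hz hy x x' hx hx'
    have hb : WF N₀ b := hy.of_flow hbc
    rcases b with b | b
    · have hx'' : nmap (Sum.inl (⟨b, hb⟩ : UP N₀)) = Sum.inl b := rfl
      refine Relation.ReflTransGen.tail (ih hz hb x _ hx hx'') ?_
      exact flow_lift (by rw [hx'']; rw [hx']; exact hbc)
    · have hx'' : nmap (Sum.inr (⟨b, hb⟩ : UT N₀)) = Sum.inr b := rfl
      refine Relation.ReflTransGen.tail (ih hz hb x _ hx hx'') ?_
      exact flow_lift (by rw [hx'']; rw [hx']; exact hbc)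

lemma conflict_map {x y : UP N₀ ⊕ UT N₀} (h : (UNet N₀).conflict x y) :
    (raw N₀).conflict (nmap x) (nmap y) := by
  obtain ⟨t₁, t₂, hne, ⟨c, hc1, hc2⟩, h1, h2⟩ := h
  refine ⟨t₁.1, t₂.1, fun hv => hne (Subtype.ext hv), ⟨c.1, hc1, hc2⟩, ?_, ?_⟩
  · exact le_map (x := Sum.inr t₁) h1
  · exact le_map (x := Sum.inr t₂) h2

lemma conflict_lift {x y : UP N₀ ⊕ UT N₀} (h : (raw N₀).conflict (nmap x) (nmap y)) :
    (UNet N₀).conflict x y := by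
  obtain ⟨e₁, e₂, hne, ⟨c, hc1, hc2⟩, h1, h2⟩ := h
  have he₁ : WF N₀ (Sum.inr e₁) := (wf_nmap x).of_le h1
  have he₂ : WF N₀ (Sum.inr e₂) := (wf_nmap y).of_le h2
  have hcwf : WF N₀ (Sum.inl c) := he₁.of_flow (show (raw N₀).flow (Sum.inl c) (Sum.inr e₁) from hc1)
  refine ⟨⟨e₁, he₁⟩, ⟨e₂, he₂⟩, fun hv => hne (congrArg Subtype.val hv),
    ⟨⟨c, hcwf⟩, hc1, hc2⟩, ?_, ?_⟩
  · exact le_lift h1 he₁ (wf_nmap x) (Sum.inr ⟨e₁, he₁⟩) x rfl rfl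
  · exact le_lift h2 he₂ (wf_nmap y) (Sum.inr ⟨e₂, he₂⟩) y rfl rfl

end UnfNet


section UnfOcc

variable {P₀ T₀ : Type} {N₀ : PreNet P₀ T₀}

lemma WF.inv_ev {e : Ev P₀ T₀} (h : WF N₀ (Sum.inr e)) :
    (∀ c ∈ e.preList, WF N₀ (Sum.inl c)) ∧
    Set.BijOn Prod.snd {c | c ∈ e.preList} (N₀.pre e.t0) ∧
    Set.Pairwise {c | c ∈ e.preList}
      (fun c c' => (raw N₀).concurrent (Sum.inl c) (Sum.inl c')) ∧
    canon e = e := by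
  cases h with
  | ev e h1 h2 h3 h4 => exact ⟨h1, h2, h3, h4⟩

lemma WF.inv_some {e : Ev P₀ T₀} {p : P₀} (h : WF N₀ (Sum.inl (some e, p))) :
    WF N₀ (Sum.inr e) ∧ p ∈ N₀.post e.t0 := by
  cases h with
  | post e p h1 h2 => exact ⟨h1, h2⟩

lemma WF.inv_none {p : P₀} (h : WF N₀ (Sum.inl ((none : Option (Ev P₀ T₀)), p))) :
    p ∈ N₀.init := by
  cases h with
  | init p h1 => exact h1

/-- Decompose `le (inr e₁) x` ending at an event. -/
lemma le_event_cases {e₁ e : Ev P₀ T₀} (h : (raw N₀).le (Sum.inr e₁) (Sum.inr e)) :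
    e₁ = e ∨ ∃ c ∈ e.preList, (raw N₀).le (Sum.inr e₁) (Sum.inl c) := by
  rcases Relation.ReflTransGen.cases_tail h with h | ⟨z, hz1, hz2⟩
  · exact Or.inl (Sum.inr.inj h.symm)
  · match z, hz2 with
    | Sum.inl c, hz2 => exact Or.inr ⟨c, hz2, hz1⟩

lemma le_cond_cases {e₁ : Ev P₀ T₀} {c : Cond P₀ T₀}
    (h : (raw N₀).le (Sum.inr e₁) (Sum.inl c)) :
    ∃ e, c.1 = some e ∧ (raw N₀).le (Sum.inr e₁) (Sum.inr e) := by
  rcases Relation.ReflTransGen.cases_tail h with h | ⟨z, hz1, hz2⟩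
  · exact absurd h (by simp)
  · match z, hz2 with
    | Sum.inr e, hz2 => exact ⟨e, hz2.1, hz1⟩

lemma raw_noConf : ∀ (x : Cond P₀ T₀ ⊕ Ev P₀ T₀), WF N₀ x →
    ∀ e₁ e₂ : Ev P₀ T₀, e₁ ≠ e₂ → ((raw N₀).pre e₁ ∩ (raw N₀).pre e₂).Nonempty →
    (raw N₀).le (Sum.inr e₁) x → (raw N₀).le (Sum.inr e₂) x → False := by
  have key : ∀ n (x : Cond P₀ T₀ ⊕ Ev P₀ T₀), msz x ≤ n → WF N₀ x →
      ∀ e₁ e₂ : Ev P₀ T₀, e₁ ≠ e₂ → ((raw N₀).pre e₁ ∩ (raw N₀).pre e₂).Nonempty →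
      (raw N₀).le (Sum.inr e₁) x → (raw N₀).le (Sum.inr e₂) x → False := by
    intro n
    induction n using Nat.strong_induction_on with
    | _ n ih =>
      intro x hx hwf e₁ e₂ hne hsh h1 h2
      match x with
      | Sum.inl c =>
        obtain ⟨e, hce, h1'⟩ := le_cond_cases h1
        obtain ⟨e', hce', h2'⟩ := le_cond_cases h2
        rw [hce] at hce'
        cases Option.some_inj.mp hce'
        have hewf : WF N₀ (Sum.inr e) := by
          match c, hce with
          | (some e, p), rfl => exact hwf.inv_some.1
        have hm : msz (Sum.inr e) < msz (Sum.inl c) := by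
          refine msz_flow (x := Sum.inr e) (y := Sum.inl c) (N₀ := N₀) ?_
          match c, hce with
          | (some e, p), rfl => exact ⟨rfl, hwf.inv_some.2⟩
        exact ih (msz (Sum.inr e)) (lt_of_lt_of_le hm hx) _ le_rfl hewf e₁ e₂ hne hsh h1' h2'
      | Sum.inr e =>
        obtain ⟨hall, hbij, hpw, _⟩ := hwf.inv_ev
        have hflow : ∀ c ∈ e.preList, (raw N₀).flow (Sum.inl c) (Sum.inr e) := fun c hc => hc
        rcases le_event_cases h1 with rfl | ⟨c₁, hc₁, hl₁⟩
        · rcases le_event_cases h2 with rfl | ⟨c₂, hc₂, hl₂⟩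
          · exact hne rfl
          · -- e₁ = e, e₂ strictly below via c₂
            obtain ⟨c, hc1, hc2⟩ := hsh
            have hcin := hc1
            by_cases hcc : c = c₂
            · subst hcc
              exact raw_acyclic N₀ (Sum.inl c)
                (Relation.TransGen.head' (show (raw N₀).flow (Sum.inl c) (Sum.inr e₂) from hc2) hl₂)
            · exact (hpw hcin hc₂ hcc).1
                (Relation.ReflTransGen.head (show (raw N₀).flow (Sum.inl c) (Sum.inr e₂) from hc2) hl₂)
        · rcases le_event_cases h2 with rfl | ⟨c₂, hc₂, hl₂⟩
          · obtain ⟨c, hc1, hc2⟩ := hsh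
            have hcin := hc2
            by_cases hcc : c = c₁
            · subst hcc
              exact raw_acyclic N₀ (Sum.inl c)
                (Relation.TransGen.head' (show (raw N₀).flow (Sum.inl c) (Sum.inr e₁) from hc1) hl₁)
            · exact (hpw hcin hc₁ hcc).1
                (Relation.ReflTransGen.head (show (raw N₀).flow (Sum.inl c) (Sum.inr e₁) from hc1) hl₁)
          · by_cases hcc : c₁ = c₂
            · subst hcc
              have hm : msz (Sum.inl c₁) < msz (Sum.inr e) := msz_flow (hflow c₁ hc₁)
              exact ih (msz (Sum.inl c₁)) (lt_of_lt_of_le hm hx) _ le_rfl (hall c₁ hc₁)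
                e₁ e₂ hne hsh hl₁ hl₂
            · exact (hpw hc₁ hc₂ hcc).2.2 ⟨e₁, e₂, hne, hsh, hl₁, hl₂⟩
  exact fun x hwf => key (msz x) x le_rfl hwf

lemma UNet_petri (hN₀ : IsPetriNet N₀) : IsPetriNet (UNet N₀) where
  pre_nonempty := by
    intro t
    obtain ⟨p₀, hp₀⟩ := hN₀.pre_nonempty t.1.t0
    obtain ⟨c, hc, _⟩ := t.2.inv_ev.2.1.surjOn hp₀
    exact ⟨⟨c, t.2.inv_ev.1 c hc⟩, hc⟩
  pre_finite := by
    intro t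
    have : ((UNet N₀).pre t) ⊆ Subtype.val ⁻¹' {c | c ∈ t.1.preList} := fun c hc => hc
    exact Set.Finite.subset (Set.Finite.preimage (Subtype.val_injective.injOn)
      (t.1.preList.finite_toSet)) this
  post_finite := by
    intro t
    have h : ((UNet N₀).post t) ⊆
        Subtype.val ⁻¹' ((fun p => ((some t.1 : Option (Ev P₀ T₀)), p)) '' N₀.post t.1.t0) := by
      rintro ⟨⟨o, p⟩, hwf⟩ hc
      obtain ⟨h1, h2⟩ := hc
      simp only at h1
      refine ⟨p, h2, ?_⟩
      show ((some t.1 : Option (Ev P₀ T₀)), p) = (o, p)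
      rw [h1]
    exact Set.Finite.subset (Set.Finite.preimage (Subtype.val_injective.injOn)
      ((hN₀.post_finite _).image _)) h

lemma UNet_occ (hN₀ : IsPetriNet N₀) : IsOccurrenceNet (UNet N₀) where
  toIsPetriNet := UNet_petri hN₀
  acyclic := by
    intro x hx
    exact raw_acyclic N₀ (nmap x) (lt_map hx)
  finitely_preceded := by
    intro x
    have h : {y | (UNet N₀).le y x} ⊆ nmap ⁻¹' {y | (raw N₀).le y (nmap x)} :=
      fun y hy => le_map hy
    exact Set.Finite.subset (Set.Finite.preimage nmap_injective.injOn
      (raw_preds_finite N₀ (nmap x))) h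
  place_pre_subsingleton := by
    intro p t ht t' ht'
    have h1 : p.1.1 = some t.1 := ht.1
    have h2 : p.1.1 = some t'.1 := ht'.1
    exact Subtype.ext (Option.some_inj.mp (h1.symm.trans h2))
  no_self_conflict := by
    intro t hc
    obtain ⟨e₁, e₂, hne, hsh, h1, h2⟩ := conflict_map hc
    exact raw_noConf _ t.2 e₁ e₂ hne hsh h1 h2
  init_eq := by
    ext c
    constructor
    · intro hc t hmem
      have : c.1.1 = some t.1 := hmem.1
      rw [hc] at this
      exact (Option.some_ne_none _ this.symm).elim
    · intro hc
      match c with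
      | ⟨(none, p), _⟩ => rfl
      | ⟨(some e, p), hwf⟩ =>
        obtain ⟨hewf, hpost⟩ := hwf.inv_some
        exact (hc ⟨e, hewf⟩ (⟨rfl, hpost⟩ :
          (⟨(some e, p), hwf⟩ : UP N₀) ∈ (UNet N₀).post ⟨e, hewf⟩)).elim

end UnfOcc


section UnfBP

variable {P₀ T₀ : Type} {N₀ : PreNet P₀ T₀}

lemma UNet_isBP (hN₀ : IsPetriNet N₀) :
    IsBranchingProcess N₀ (UNet N₀) (fpU (N₀ := N₀)) (ftU (N₀ := N₀)) where
  occ := UNet_occ hN₀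
  hom := {
    pre_bij := by
      intro t
      obtain ⟨hall, hbij, _, _⟩ := t.2.inv_ev
      refine ⟨?_, ?_, ?_⟩
      · intro c hc
        exact hbij.mapsTo hc
      · intro c hc c' hc' hcc
        exact Subtype.ext (hbij.injOn hc hc' hcc)
      · intro p₀ hp₀
        obtain ⟨c, hc, hc2⟩ := hbij.surjOn hp₀
        exact ⟨⟨c, hall c hc⟩, hc, hc2⟩
    post_bij := by
      intro t
      refine ⟨?_, ?_, ?_⟩
      · intro c hc
        exact hc.2
      · rintro ⟨⟨o, p⟩, h⟩ hc ⟨⟨o', p'⟩, h'⟩ hc' hcc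
        have h1 : o = some t.1 := hc.1
        have h2 : o' = some t.1 := hc'.1
        have : p = p' := hcc
        subst this
        refine Subtype.ext ?_
        show ((o, p) : Cond P₀ T₀) = (o', p)
        rw [h1, h2]
      · intro p₀ hp₀
        have hwf : WF N₀ (Sum.inl ((some t.1 : Option (Ev P₀ T₀)), p₀)) := WF.post _ _ t.2 hp₀
        exact ⟨⟨(some t.1, p₀), hwf⟩, ⟨rfl, hp₀⟩, rfl⟩
    init_bij := by
      refine ⟨?_, ?_, ?_⟩
      · rintro ⟨⟨o, p⟩, h⟩ hc
        have : o = none := hc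
        subst this
        exact h.inv_none
      · rintro ⟨⟨o, p⟩, h⟩ hc ⟨⟨o', p'⟩, h'⟩ hc' hcc
        have h1 : o = none := hc
        have h2 : o' = none := hc'
        have : p = p' := hcc
        subst this
        refine Subtype.ext ?_
        show ((o, p) : Cond P₀ T₀) = (o', p)
        rw [h1, h2]
      · intro p₀ hp₀
        exact ⟨⟨(none, p₀), WF.init _ hp₀⟩, rfl, rfl⟩ }
  unique := by
    rintro t₁ t₂ hpre hft
    obtain ⟨hall₁, _, _, hcan₁⟩ := t₁.2.inv_ev
    obtain ⟨hall₂, _, _, hcan₂⟩ := t₂.2.inv_ev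
    have hps : {c | c ∈ t₁.1.preList} = {c | c ∈ t₂.1.preList} := by
      ext c
      constructor
      · intro hc
        have : (⟨c, hall₁ c hc⟩ : UP N₀) ∈ (UNet N₀).pre t₁ := hc
        rw [hpre] at this
        exact this
      · intro hc
        have : (⟨c, hall₂ c hc⟩ : UP N₀) ∈ (UNet N₀).pre t₂ := hc
        rw [← hpre] at this
        exact this
    have : canon t₁.1 = canon t₂.1 := canon_eq_of_rel hps hft
    exact Subtype.ext (by rw [← hcan₁, ← hcan₂, this])

end UnfBP


section Embed

variable {P₀ T₀ P T : Type} {N₀ : PreNet P₀ T₀} {B : PreNet P T} {fp : P → P₀} {ft : T → T₀}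

open scoped Classical

/-- The preset of a transition of a branching process, as a finset. -/
noncomputable def preFinset (hN₀ : IsPetriNet N₀) (hB : IsBranchingProcess N₀ B fp ft)
    (t : T) : Finset P :=
  (Set.Finite.of_finite_image
    (by rw [(hB.hom.pre_bij t).image_eq]; exact hN₀.pre_finite _)
    (hB.hom.pre_bij t).injOn).toFinset

lemma mem_preFinset (hN₀ : IsPetriNet N₀) (hB : IsBranchingProcess N₀ B fp ft)
    {t : T} {q : P} : q ∈ preFinset hN₀ hB t ↔ q ∈ B.pre t :=
  Set.Finite.mem_toFinset _

/-- The recursion functional for the canonical embedding of `B` into the unfolding. -/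
noncomputable def embF (hN₀ : IsPetriNet N₀) (hB : IsBranchingProcess N₀ B fp ft)
    (x : P ⊕ T)
    (rec : ∀ y, B.flow y x → Sum.elim (fun _ : P => Cond P₀ T₀) (fun _ : T => Ev P₀ T₀) y) :
    Sum.elim (fun _ : P => Cond P₀ T₀) (fun _ : T => Ev P₀ T₀) x :=
  match x, rec with
  | Sum.inl p, rec =>
    if h : ∀ t', p ∉ B.post t' then ((none, fp p) : Cond P₀ T₀)
    else
      have hex : ∃ t', p ∈ B.post t' := by push_neg at h; exact h
      ((some (rec (Sum.inr (Classical.choose hex))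
        (show B.flow (Sum.inr (Classical.choose hex)) (Sum.inl p) from
          Classical.choose_spec hex)), fp p) : Cond P₀ T₀)
  | Sum.inr t, rec =>
    canon (Ev.mk (((preFinset hN₀ hB t).attach.toList).map
      (fun q => rec (Sum.inl q.1)
        (show B.flow (Sum.inl q.1) (Sum.inr t) from (mem_preFinset hN₀ hB).mp q.2))) (ft t))

noncomputable def embAux (hN₀ : IsPetriNet N₀) (hB : IsBranchingProcess N₀ B fp ft) :
    ∀ x : P ⊕ T, Sum.elim (fun _ : P => Cond P₀ T₀) (fun _ : T => Ev P₀ T₀) x :=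
  (flow_wf hB.occ.acyclic hB.occ.finitely_preceded).fix (embF hN₀ hB)

lemma embAux_eq (hN₀ : IsPetriNet N₀) (hB : IsBranchingProcess N₀ B fp ft) (x : P ⊕ T) :
    embAux hN₀ hB x = embF hN₀ hB x (fun y _ => embAux hN₀ hB y) :=
  WellFounded.fix_eq _ _ _

/-- The embedding on places. -/
noncomputable def hpE (hN₀ : IsPetriNet N₀) (hB : IsBranchingProcess N₀ B fp ft)
    (p : P) : Cond P₀ T₀ := embAux hN₀ hB (Sum.inl p)

/-- The embedding on transitions. -/
noncomputable def htE (hN₀ : IsPetriNet N₀) (hB : IsBranchingProcess N₀ B fp ft)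
    (t : T) : Ev P₀ T₀ := embAux hN₀ hB (Sum.inr t)

variable (hN₀ : IsPetriNet N₀) (hB : IsBranchingProcess N₀ B fp ft)

lemma hpE_init {p : P} (h : ∀ t', p ∉ B.post t') : hpE hN₀ hB p = (none, fp p) := by
  unfold hpE
  rw [embAux_eq]
  show (if h : ∀ t', p ∉ B.post t' then ((none, fp p) : Cond P₀ T₀) else _) = _
  rw [dif_pos h]

lemma hpE_post {p : P} {t' : T} (h : p ∈ B.post t') :
    hpE hN₀ hB p = (some (htE hN₀ hB t'), fp p) := by
  have hni : ¬ ∀ t'', p ∉ B.post t'' := fun hh => hh t' h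
  have hex : ∃ t'', p ∈ B.post t'' := by push_neg at hni; exact hni
  have hch : Classical.choose hex = t' :=
    hB.occ.place_pre_subsingleton p (Classical.choose_spec hex) h
  unfold hpE
  rw [embAux_eq]
  show (if hh : ∀ t'', p ∉ B.post t'' then ((none, fp p) : Cond P₀ T₀) else
    have hex : ∃ t'', p ∈ B.post t'' := by push_neg at hh; exact hh
    ((some (embAux hN₀ hB (Sum.inr (Classical.choose hex))), fp p) : Cond P₀ T₀)) = _
  rw [dif_neg hni]
  show (some (embAux hN₀ hB (Sum.inr (Classical.choose _))), fp p) = _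
  rw [show Classical.choose _ = t' from hch]
  rfl

lemma hpE_snd (p : P) : (hpE hN₀ hB p).2 = fp p := by
  by_cases h : ∀ t', p ∉ B.post t'
  · rw [hpE_init hN₀ hB h]
  · push_neg at h
    obtain ⟨t', ht'⟩ := h
    rw [hpE_post hN₀ hB ht']

lemma htE_eq (t : T) : htE hN₀ hB t = canon (Ev.mk
    (((preFinset hN₀ hB t).attach.toList).map (fun q => hpE hN₀ hB q.1)) (ft t)) := by
  unfold htE
  rw [embAux_eq]
  rfl

lemma t0_htE (t : T) : (htE hN₀ hB t).t0 = ft t := by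
  rw [htE_eq]
  exact (canon_rel _).2

lemma preSet_htE (t : T) :
    {c | c ∈ (htE hN₀ hB t).preList} = hpE hN₀ hB '' B.pre t := by
  rw [htE_eq, (canon_rel _).1]
  ext c
  constructor
  · intro hc
    simp only [Set.mem_setOf_eq, Ev.preList, List.mem_map] at hc
    obtain ⟨q, _, rfl⟩ := hc
    exact ⟨q.1, (mem_preFinset hN₀ hB).mp q.2, rfl⟩
  · rintro ⟨q, hq, rfl⟩
    simp only [Set.mem_setOf_eq, Ev.preList, List.mem_map]
    exact ⟨⟨q, (mem_preFinset hN₀ hB).mpr hq⟩, by simp, rfl⟩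

lemma canon_htE (t : T) : canon (htE hN₀ hB t) = htE hN₀ hB t := by
  rw [htE_eq]
  exact canon_canon _

/-- The embedding on nodes. -/
noncomputable def hhE : P ⊕ T → Cond P₀ T₀ ⊕ Ev P₀ T₀ :=
  Sum.map (hpE hN₀ hB) (htE hN₀ hB)

lemma emb_inj : ∀ x y : P ⊕ T, hhE hN₀ hB x = hhE hN₀ hB y → x = y := by
  intro x
  induction x using WellFounded.induction (flow_wf hB.occ.acyclic hB.occ.finitely_preceded) with
  | _ x ih =>
    intro y hxy
    match x, y with
    | Sum.inl p, Sum.inr t => exact absurd hxy (by simp [hhE])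
    | Sum.inr t, Sum.inl p => exact absurd hxy (by simp [hhE])
    | Sum.inl p, Sum.inl p' =>
      have hpp : hpE hN₀ hB p = hpE hN₀ hB p' := Sum.inl.inj hxy
      by_cases h : ∀ t', p ∉ B.post t' <;> by_cases h' : ∀ t', p' ∉ B.post t'
      · rw [hpE_init hN₀ hB h, hpE_init hN₀ hB h'] at hpp
        have hfp : fp p = fp p' := (Prod.ext_iff.mp hpp).2
        have hp1 : p ∈ B.init := by rw [hB.occ.init_eq]; exact h
        have hp2 : p' ∈ B.init := by rw [hB.occ.init_eq]; exact h'
        exact congrArg Sum.inl (hB.hom.init_bij.injOn hp1 hp2 hfp)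
      · push_neg at h'
        obtain ⟨t', ht'⟩ := h'
        rw [hpE_init hN₀ hB h, hpE_post hN₀ hB ht'] at hpp
        exact absurd (Prod.ext_iff.mp hpp).1 (by simp)
      · push_neg at h
        obtain ⟨t', ht'⟩ := h
        rw [hpE_post hN₀ hB ht', hpE_init hN₀ hB h'] at hpp
        exact absurd (Prod.ext_iff.mp hpp).1 (by simp)
      · push_neg at h; push_neg at h'
        obtain ⟨t₁, ht₁⟩ := h
        obtain ⟨t₂, ht₂⟩ := h'
        rw [hpE_post hN₀ hB ht₁, hpE_post hN₀ hB ht₂] at hpp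
        obtain ⟨hfst, hsnd⟩ := Prod.ext_iff.mp hpp
        have hte : htE hN₀ hB t₁ = htE hN₀ hB t₂ := Option.some_inj.mp hfst
        have h12 : Sum.inr t₁ = Sum.inr t₂ :=
          ih (Sum.inr t₁) (show B.flow (Sum.inr t₁) (Sum.inl p) from ht₁) (Sum.inr t₂)
            (congrArg Sum.inr hte)
        cases h12
        exact congrArg Sum.inl ((hB.hom.post_bij t₁).injOn ht₁ ht₂ hsnd)
    | Sum.inr t, Sum.inr t' =>
      have hte : htE hN₀ hB t = htE hN₀ hB t' := Sum.inr.inj hxy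
      have hps : hpE hN₀ hB '' B.pre t = hpE hN₀ hB '' B.pre t' := by
        rw [← preSet_htE hN₀ hB, ← preSet_htE hN₀ hB, hte]
      have hft : ft t = ft t' := by
        rw [← t0_htE hN₀ hB t, ← t0_htE hN₀ hB t', hte]
      have hpre : B.pre t = B.pre t' := by
        ext q
        constructor
        · intro hq
          have hmem : hpE hN₀ hB q ∈ hpE hN₀ hB '' B.pre t' := hps ▸ ⟨q, hq, rfl⟩
          obtain ⟨q', hq', heq⟩ := hmem
          have := ih (Sum.inl q) (show B.flow (Sum.inl q) (Sum.inr t) from hq) (Sum.inl q')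
            (congrArg Sum.inl heq.symm)
          cases this
          exact hq'
        · intro hq'
          have hmem : hpE hN₀ hB q ∈ hpE hN₀ hB '' B.pre t := hps.symm ▸ ⟨q, hq', rfl⟩
          obtain ⟨q₀, hq₀, heq⟩ := hmem
          have := ih (Sum.inl q₀) (show B.flow (Sum.inl q₀) (Sum.inr t) from hq₀) (Sum.inl q)
            (congrArg Sum.inl heq)
          cases this
          exact hq₀
      exact congrArg Sum.inr (hB.unique t t' hpre hft)

lemma emb_main : ∀ x : P ⊕ T, WF N₀ (hhE hN₀ hB x) ∧
    ∀ z, (raw N₀).le z (hhE hN₀ hB x) → ∃ x', B.le x' x ∧ hhE hN₀ hB x' = z := by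
  intro x
  induction x using WellFounded.induction (flow_wf hB.occ.acyclic hB.occ.finitely_preceded) with
  | _ x ih =>
    match x with
    | Sum.inl p =>
      by_cases h : ∀ t', p ∉ B.post t'
      · have hrw : hhE hN₀ hB (Sum.inl p) = Sum.inl ((none, fp p) : Cond P₀ T₀) :=
          congrArg Sum.inl (hpE_init hN₀ hB h)
        constructor
        · rw [hrw]
          exact WF.init _ (hB.hom.init_bij.mapsTo (by rw [hB.occ.init_eq]; exact h))
        · intro z hz
          rcases Relation.ReflTransGen.cases_tail hz with heq | ⟨w, hw1, hw2⟩
          · exact ⟨Sum.inl p, Relation.ReflTransGen.refl, heq⟩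
          · rw [hrw] at hw2
            match w, hw2 with
            | Sum.inr e, hw2 => exact absurd hw2.1 (by simp)
      · push_neg at h
        obtain ⟨t₁, ht₁⟩ := h
        have hflow₁ : B.flow (Sum.inr t₁) (Sum.inl p) := ht₁
        have hrw : hhE hN₀ hB (Sum.inl p) =
            Sum.inl ((some (htE hN₀ hB t₁), fp p) : Cond P₀ T₀) :=
          congrArg Sum.inl (hpE_post hN₀ hB ht₁)
        constructor
        · rw [hrw]
          refine WF.post _ _ (ih (Sum.inr t₁) hflow₁).1 ?_
          rw [t0_htE]
          exact (hB.hom.post_bij t₁).mapsTo ht₁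
        · intro z hz
          rcases Relation.ReflTransGen.cases_tail hz with heq | ⟨w, hw1, hw2⟩
          · exact ⟨Sum.inl p, Relation.ReflTransGen.refl, heq⟩
          · rw [hrw] at hw2
            match w, hw2 with
            | Sum.inr e, hw2 =>
              cases Option.some_inj.mp hw2.1
              obtain ⟨x', hx1, hx2⟩ := (ih (Sum.inr t₁) hflow₁).2 z hw1
              exact ⟨x', Relation.ReflTransGen.tail hx1 hflow₁, hx2⟩
    | Sum.inr t =>
      have hpreset := preSet_htE hN₀ hB t
      constructor
      · show WF N₀ (Sum.inr (htE hN₀ hB t))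
        refine WF.ev _ ?_ ?_ ?_ (canon_htE hN₀ hB t)
        · intro c hc
          have hmem : c ∈ hpE hN₀ hB '' B.pre t := hpreset ▸ hc
          obtain ⟨q, hq, rfl⟩ := hmem
          exact (ih (Sum.inl q) (show B.flow (Sum.inl q) (Sum.inr t) from hq)).1
        · rw [show {c | c ∈ (htE hN₀ hB t).preList} = hpE hN₀ hB '' B.pre t from hpreset,
            t0_htE]
          refine ⟨?_, ?_, ?_⟩
          · rintro c ⟨q, hq, rfl⟩
            rw [hpE_snd]
            exact (hB.hom.pre_bij t).mapsTo hq
          · rintro c ⟨q, hq, rfl⟩ c' ⟨q', hq', rfl⟩ hcc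
            rw [hpE_snd, hpE_snd] at hcc
            rw [(hB.hom.pre_bij t).injOn hq hq' hcc]
          · intro p₀ hp₀
            obtain ⟨q, hq, hq2⟩ := (hB.hom.pre_bij t).surjOn hp₀
            exact ⟨hpE hN₀ hB q, ⟨q, hq, rfl⟩, by rw [hpE_snd]; exact hq2⟩
        · rw [show {c | c ∈ (htE hN₀ hB t).preList} = hpE hN₀ hB '' B.pre t from hpreset]
          rintro c ⟨q, hq, rfl⟩ c' ⟨q', hq', rfl⟩ hne
          have hqflow : B.flow (Sum.inl q) (Sum.inr t) := hq
          have hq'flow : B.flow (Sum.inl q') (Sum.inr t) := hq'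
          have hqq : q ≠ q' := fun hh => hne (by rw [hh])
          have hconcB := preset_concurrent hB.occ hq hq' hqq
          refine ⟨?_, ?_, ?_⟩
          · intro hle
            obtain ⟨x', hx1, hx2⟩ := (ih (Sum.inl q') hq'flow).2 (Sum.inl (hpE hN₀ hB q)) hle
            have := emb_inj hN₀ hB x' (Sum.inl q) hx2
            subst this
            exact hconcB.1 hx1
          · intro hle
            obtain ⟨x', hx1, hx2⟩ := (ih (Sum.inl q) hqflow).2 (Sum.inl (hpE hN₀ hB q')) hle
            have := emb_inj hN₀ hB x' (Sum.inl q') hx2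
            subst this
            exact hconcB.2.1 hx1
          · rintro ⟨e₁, e₂, hne12, ⟨c₀, hc₀1, hc₀2⟩, hl₁, hl₂⟩
            obtain ⟨x₁, hx₁1, hx₁2⟩ := (ih (Sum.inl q) hqflow).2 (Sum.inr e₁) hl₁
            obtain ⟨x₂, hx₂1, hx₂2⟩ := (ih (Sum.inl q') hq'flow).2 (Sum.inr e₂) hl₂
            match x₁, hx₁2 with
            | Sum.inr t₁, hx₁2 =>
            match x₂, hx₂2 with
            | Sum.inr t₂, hx₂2 =>
              have he₁ : htE hN₀ hB t₁ = e₁ := Sum.inr.inj hx₁2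
              have he₂ : htE hN₀ hB t₂ = e₂ := Sum.inr.inj hx₂2
              have ht12 : t₁ ≠ t₂ := fun hh => hne12 (by rw [← he₁, ← he₂, hh])
              have hc₁' : c₀ ∈ hpE hN₀ hB '' B.pre t₁ := by
                rw [← preSet_htE hN₀ hB, he₁]; exact hc₀1
              have hc₂' : c₀ ∈ hpE hN₀ hB '' B.pre t₂ := by
                rw [← preSet_htE hN₀ hB, he₂]; exact hc₀2
              obtain ⟨q₁, hq₁, hq₁2⟩ := hc₁'
              obtain ⟨q₂, hq₂, hq₂2⟩ := hc₂'
              have hq12 : q₁ = q₂ := Sum.inl.inj (emb_inj hN₀ hB (Sum.inl q₁) (Sum.inl q₂)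
                (congrArg Sum.inl (hq₁2.trans hq₂2.symm)))
              exact hconcB.2.2 ⟨t₁, t₂, ht12, ⟨q₁, hq₁, hq12 ▸ hq₂⟩, hx₁1, hx₂1⟩
      · intro z hz
        rcases Relation.ReflTransGen.cases_tail hz with heq | ⟨w, hw1, hw2⟩
        · exact ⟨Sum.inr t, Relation.ReflTransGen.refl, heq⟩
        · match w, hw2 with
          | Sum.inl c, hw2 =>
            have hmem : c ∈ hpE hN₀ hB '' B.pre t := hpreset ▸ hw2
            obtain ⟨q, hq, rfl⟩ := hmem
            obtain ⟨x', hx1, hx2⟩ :=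
              (ih (Sum.inl q) (show B.flow (Sum.inl q) (Sum.inr t) from hq)).2 z hw1
            exact ⟨x', Relation.ReflTransGen.tail hx1
              (show B.flow (Sum.inl q) (Sum.inr t) from hq), hx2⟩

include hN₀ hB in
lemma emb_BPle : BPle B fp ft (UNet N₀) (fpU (N₀ := N₀)) (ftU (N₀ := N₀)) := by
  refine ⟨fun p => ⟨hpE hN₀ hB p, (emb_main hN₀ hB (Sum.inl p)).1⟩,
    fun t => ⟨htE hN₀ hB t, (emb_main hN₀ hB (Sum.inr t)).1⟩, ⟨?_, ?_, ?_⟩, ?_, ?_, ?_, ?_⟩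
  · -- pre_bij
    intro t
    have hpreset := preSet_htE hN₀ hB t
    refine ⟨?_, ?_, ?_⟩
    · intro q hq
      show hpE hN₀ hB q ∈ {c | c ∈ (htE hN₀ hB t).preList}
      rw [hpreset]
      exact ⟨q, hq, rfl⟩
    · intro q _ q' _ hqq
      exact Sum.inl.inj (emb_inj hN₀ hB (Sum.inl q) (Sum.inl q')
        (congrArg Sum.inl (congrArg Subtype.val hqq)))
    · intro c hc
      have hmem : c.1 ∈ hpE hN₀ hB '' B.pre t := hpreset ▸ hc
      obtain ⟨q, hq, heq⟩ := hmem
      exact ⟨q, hq, Subtype.ext heq⟩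
  · -- post_bij
    intro t
    refine ⟨?_, ?_, ?_⟩
    · intro q hq
      refine ⟨?_, ?_⟩
      · show (hpE hN₀ hB q).1 = some (htE hN₀ hB t)
        rw [hpE_post hN₀ hB hq]
      · show (hpE hN₀ hB q).2 ∈ N₀.post (htE hN₀ hB t).t0
        rw [hpE_snd, t0_htE]
        exact (hB.hom.post_bij t).mapsTo hq
    · intro q _ q' _ hqq
      exact Sum.inl.inj (emb_inj hN₀ hB (Sum.inl q) (Sum.inl q')
        (congrArg Sum.inl (congrArg Subtype.val hqq)))
    · intro c hc
      obtain ⟨hc1, hc2⟩ := hc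
      rw [t0_htE] at hc2
      obtain ⟨q, hq, hq2⟩ := (hB.hom.post_bij t).surjOn hc2
      refine ⟨q, hq, Subtype.ext ?_⟩
      show hpE hN₀ hB q = c.1
      rw [hpE_post hN₀ hB hq]
      have : c.1 = (c.1.1, c.1.2) := rfl
      rw [this, ← hc1, hq2]
  · -- init_bij
    refine ⟨?_, ?_, ?_⟩
    · intro p hp
      have h : ∀ t', p ∉ B.post t' := by rw [hB.occ.init_eq] at hp; exact hp
      show (hpE hN₀ hB p).1 = none
      rw [hpE_init hN₀ hB h]
    · intro p _ p' _ hpp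
      exact Sum.inl.inj (emb_inj hN₀ hB (Sum.inl p) (Sum.inl p')
        (congrArg Sum.inl (congrArg Subtype.val hpp)))
    · intro c hc
      have hc1 : c.1.1 = none := hc
      have hcwf := c.2
      have hrw : c.1 = ((none : Option (Ev P₀ T₀)), c.1.2) := by
        have : c.1 = (c.1.1, c.1.2) := rfl
        rw [this, hc1]
      have hinit : c.1.2 ∈ N₀.init := by
        rw [hrw] at hcwf
        exact hcwf.inv_none
      obtain ⟨p, hp, hp2⟩ := hB.hom.init_bij.surjOn hinit
      refine ⟨p, hp, Subtype.ext ?_⟩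
      have h : ∀ t', p ∉ B.post t' := by rw [hB.occ.init_eq] at hp; exact hp
      show hpE hN₀ hB p = c.1
      rw [hpE_init hN₀ hB h, hrw, hp2]
  · -- fpU ∘ gp = fp
    funext p
    exact hpE_snd hN₀ hB p
  · -- ftU ∘ gt = ft
    funext t
    exact t0_htE hN₀ hB t
  · -- injective gp
    intro p p' hpp
    exact Sum.inl.inj (emb_inj hN₀ hB (Sum.inl p) (Sum.inl p')
      (congrArg Sum.inl (congrArg Subtype.val hpp)))
  · -- injective gt
    intro t t' htt
    exact Sum.inr.inj (emb_inj hN₀ hB (Sum.inr t) (Sum.inr t')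
      (congrArg Sum.inr (congrArg Subtype.val htt)))

end Embed



section Unique

variable {P₀ T₀ P₁ T₁ P₂ T₂ P₃ T₃ : Type}

lemma IsNetHom.idHom (N : PreNet P₁ T₁) : IsNetHom N N id id :=
  ⟨fun _ => Set.bijOn_id _, fun _ => Set.bijOn_id _, Set.bijOn_id _⟩

lemma IsNetHom.compHom {N₁ : PreNet P₁ T₁} {N₂ : PreNet P₂ T₂} {N₃ : PreNet P₃ T₃}
    {g : P₁ → P₂} {h : T₁ → T₂} {g' : P₂ → P₃} {h' : T₂ → T₃}
    (h12 : IsNetHom N₁ N₂ g h) (h23 : IsNetHom N₂ N₃ g' h') :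
    IsNetHom N₁ N₃ (g' ∘ g) (h' ∘ h) :=
  ⟨fun t => (h23.pre_bij (h t)).comp (h12.pre_bij t),
   fun t => (h23.post_bij (h t)).comp (h12.post_bij t),
   h23.init_bij.comp h12.init_bij⟩

/-- Homomorphisms between branching processes that commute with the projections
are unique. -/
lemma hom_unique {N₀ : PreNet P₀ T₀} {B₁ : PreNet P₁ T₁} {fp₁ : P₁ → P₀} {ft₁ : T₁ → T₀}
    {B₂ : PreNet P₂ T₂} {fp₂ : P₂ → P₀} {ft₂ : T₂ → T₀}
    (hB₁ : IsBranchingProcess N₀ B₁ fp₁ ft₁) (hB₂ : IsBranchingProcess N₀ B₂ fp₂ ft₂)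
    {g g' : P₁ → P₂} {h h' : T₁ → T₂}
    (hg : IsNetHom B₁ B₂ g h) (hg' : IsNetHom B₁ B₂ g' h')
    (hc1 : fp₂ ∘ g = fp₁) (hc2 : ft₂ ∘ h = ft₁)
    (hc1' : fp₂ ∘ g' = fp₁) (hc2' : ft₂ ∘ h' = ft₁) :
    (∀ p, g p = g' p) ∧ (∀ t, h t = h' t) := by
  have main : ∀ x : P₁ ⊕ T₁,
      Sum.elim (fun p => g p = g' p) (fun t => h t = h' t) x := by
    intro x
    induction x using WellFounded.induction
      (flow_wf hB₁.occ.acyclic hB₁.occ.finitely_preceded) with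
    | _ x ih =>
      match x with
      | Sum.inl p =>
        show g p = g' p
        by_cases hp : p ∈ B₁.init
        · have h1 : g p ∈ B₂.init := hg.init_bij.mapsTo hp
          have h2 : g' p ∈ B₂.init := hg'.init_bij.mapsTo hp
          have hfp : fp₂ (g p) = fp₂ (g' p) := by
            rw [show fp₂ (g p) = (fp₂ ∘ g) p from rfl, show fp₂ (g' p) = (fp₂ ∘ g') p from rfl,
              hc1, hc1']
          exact hB₂.hom.init_bij.injOn h1 h2 hfp
        · obtain ⟨t, ht⟩ := exists_post_of_not_init hB₁.occ hp
          have hht : h t = h' t := ih (Sum.inr t) (show B₁.flow (Sum.inr t) (Sum.inl p) from ht)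
          have h1 : g p ∈ B₂.post (h t) := (hg.post_bij t).mapsTo ht
          have h2 : g' p ∈ B₂.post (h t) := hht ▸ (hg'.post_bij t).mapsTo ht
          have hfp : fp₂ (g p) = fp₂ (g' p) := by
            rw [show fp₂ (g p) = (fp₂ ∘ g) p from rfl, show fp₂ (g' p) = (fp₂ ∘ g') p from rfl,
              hc1, hc1']
          exact (hB₂.hom.post_bij (h t)).injOn h1 h2 hfp
      | Sum.inr t =>
        show h t = h' t
        have hpre : B₂.pre (h t) = B₂.pre (h' t) := by
          rw [← (hg.pre_bij t).image_eq, ← (hg'.pre_bij t).image_eq]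
          apply Set.image_congr
          intro q hq
          exact ih (Sum.inl q) (show B₁.flow (Sum.inl q) (Sum.inr t) from hq)
        have hft : ft₂ (h t) = ft₂ (h' t) := by
          rw [show ft₂ (h t) = (ft₂ ∘ h) t from rfl, show ft₂ (h' t) = (ft₂ ∘ h') t from rfl,
            hc2, hc2']
        exact hB₂.unique _ _ hpre hft
  exact ⟨fun p => main (Sum.inl p), fun t => main (Sum.inr t)⟩

/-- Two maximal branching processes are isomorphic. -/
lemma maximal_unique {N₀ : PreNet P₀ T₀} {U₁ : PreNet P₁ T₁} {fp₁ : P₁ → P₀} {ft₁ : T₁ → T₀}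
    {U₂ : PreNet P₂ T₂} {fp₂ : P₂ → P₀} {ft₂ : T₂ → T₀}
    (hU₁ : IsBranchingProcess N₀ U₁ fp₁ ft₁) (hU₂ : IsBranchingProcess N₀ U₂ fp₂ ft₂)
    (h12 : BPle U₁ fp₁ ft₁ U₂ fp₂ ft₂) (h21 : BPle U₂ fp₂ ft₂ U₁ fp₁ ft₁) :
    BPEquiv U₁ fp₁ ft₁ U₂ fp₂ ft₂ := by
  obtain ⟨g, h, hgh, hcg, hch, _, _⟩ := h12
  obtain ⟨g', h', hgh', hcg', hch', _, _⟩ := h21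
  have hcomp : IsNetHom U₁ U₁ (g' ∘ g) (h' ∘ h) := hgh.compHom hgh'
  have hcomp' : IsNetHom U₂ U₂ (g ∘ g') (h ∘ h') := hgh'.compHom hgh
  have hcc1 : fp₁ ∘ (g' ∘ g) = fp₁ := by
    rw [show fp₁ ∘ (g' ∘ g) = (fp₁ ∘ g') ∘ g from rfl, hcg', hcg]
  have hcc2 : ft₁ ∘ (h' ∘ h) = ft₁ := by
    rw [show ft₁ ∘ (h' ∘ h) = (ft₁ ∘ h') ∘ h from rfl, hch', hch]
  have hcc1' : fp₂ ∘ (g ∘ g') = fp₂ := by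
    rw [show fp₂ ∘ (g ∘ g') = (fp₂ ∘ g) ∘ g' from rfl, hcg, hcg']
  have hcc2' : ft₂ ∘ (h ∘ h') = ft₂ := by
    rw [show ft₂ ∘ (h ∘ h') = (ft₂ ∘ h) ∘ h' from rfl, hch, hch']
  obtain ⟨hgid, hhid⟩ := hom_unique hU₁ hU₁ hcomp (IsNetHom.idHom U₁)
    hcc1 hcc2 (Function.comp_id fp₁) (Function.comp_id ft₁)
  obtain ⟨hgid', hhid'⟩ := hom_unique hU₂ hU₂ hcomp' (IsNetHom.idHom U₂)
    hcc1' hcc2' (Function.comp_id fp₂) (Function.comp_id ft₂)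
  refine ⟨g, h, hgh, hcg, hch, ?_, ?_⟩
  · exact Function.bijective_iff_has_inverse.mpr ⟨g', fun p => hgid p, fun p => hgid' p⟩
  · exact Function.bijective_iff_has_inverse.mpr ⟨h', fun t => hhid t, fun t => hhid' t⟩

end Unique

/-- Every finite safe Petri net `N₀` has an unfolding: a branching
process of `N₀` that is maximal with respect to the subprocess relation `≤`
(every branching process of `N₀` embeds into it), and any two such maximal
branching processes of `N₀` are isomorphic. -/
theorem unfolding_exists_unique {P₀ T₀ : Type} [Finite P₀] [Finite T₀]
    (N₀ : PreNet P₀ T₀) (hN₀ : IsPetriNet N₀) (hsafe : N₀.Safe) :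
    (∃ (P T : Type) (U : PreNet P T) (fpU : P → P₀) (ftU : T → T₀),
      IsBranchingProcess N₀ U fpU ftU ∧
      ∀ (P' T' : Type) (B : PreNet P' T') (fp : P' → P₀) (ft : T' → T₀),
        IsBranchingProcess N₀ B fp ft → BPle B fp ft U fpU ftU) ∧
    (∀ (P₁ T₁ P₂ T₂ : Type) (U₁ : PreNet P₁ T₁) (fp₁ : P₁ → P₀) (ft₁ : T₁ → T₀)
       (U₂ : PreNet P₂ T₂) (fp₂ : P₂ → P₀) (ft₂ : T₂ → T₀),
      IsBranchingProcess N₀ U₁ fp₁ ft₁ →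
      IsBranchingProcess N₀ U₂ fp₂ ft₂ →
      (∀ (P' T' : Type) (B : PreNet P' T') (fp : P' → P₀) (ft : T' → T₀),
        IsBranchingProcess N₀ B fp ft → BPle B fp ft U₁ fp₁ ft₁) →
      (∀ (P' T' : Type) (B : PreNet P' T') (fp : P' → P₀) (ft : T' → T₀),
        IsBranchingProcess N₀ B fp ft → BPle B fp ft U₂ fp₂ ft₂) →
      BPEquiv U₁ fp₁ ft₁ U₂ fp₂ ft₂) := by
  constructor
  · exact ⟨UP N₀, UT N₀, UNet N₀, fpU, ftU, UNet_isBP hN₀,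
      fun P' T' B fp ft hB => emb_BPle hN₀ hB⟩
  · intro P₁ T₁ P₂ T₂ U₁ fp₁ ft₁ U₂ fp₂ ft₂ hU₁ hU₂ hmax₁ hmax₂
    exact maximal_unique hU₁ hU₂ (hmax₂ _ _ _ _ _ hU₁) (hmax₁ _ _ _ _ _ hU₂)

end PG
end

section
/- The subprocess relation ≤ on branching processes of a fixed Petri net N₀ is a partial order up to isomorphism: it is reflexive and transitive, and if B₁ ≤ B₂ and B₂ ≤ B₁ then B₁ ≅ B₂. -/
namespace PG

section Aux

variable {P₀ T₀ P T : Type}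

lemma lt_wf (N : PreNet P T) (hacyc : ∀ x, ¬ N.lt x x)
    (hfin : ∀ x, {y | N.le y x}.Finite) : WellFounded N.lt := by
  have hfin' : ∀ x, {y | N.lt y x}.Finite := fun x =>
    (hfin x).subset (fun y hy => Relation.TransGen.to_reflTransGen hy)
  have A : ∀ n (x : P ⊕ T), ({y | N.lt y x}).ncard < n → Acc N.lt x := by
    intro n
    induction n with
    | zero => intro x hx; exact absurd hx (Nat.not_lt_zero _)
    | succ n ih =>
      intro x hx
      constructor
      intro y hyx
      apply ih
      have hss : {z | N.lt z y} ⊂ {z | N.lt z x} := by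
        constructor
        · intro z hz; exact Relation.TransGen.trans hz hyx
        · intro hsup
          exact hacyc y (hsup hyx)
      have := Set.ncard_lt_ncard hss (hfin' x)
      omega
  constructor
  intro x
  exact A (({y | N.lt y x}).ncard + 1) x (Nat.lt_succ_self _)

lemma endo_id {N₀ : PreNet P₀ T₀} {B : PreNet P T} {fp : P → P₀} {ft : T → T₀}
    (hB : IsBranchingProcess N₀ B fp ft)
    {gp : P → P} {gt : T → T} (hg : IsNetHom B B gp gt)
    (hfp : fp ∘ gp = fp) (hft : ft ∘ gt = ft) :
    (∀ p, gp p = p) ∧ (∀ t, gt t = t) := by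
  have hwf := lt_wf B hB.occ.acyclic hB.occ.finitely_preceded
  have key : ∀ x : P ⊕ T,
      (∀ p : P, x = Sum.inl p → gp p = p) ∧ (∀ t : T, x = Sum.inr t → gt t = t) := by
    intro x
    induction x using hwf.induction with
    | _ x IH =>
      constructor
      · rintro p rfl
        by_cases hp : ∃ t : T, p ∈ B.post t
        · obtain ⟨t, hpt⟩ := hp
          have hlt : B.lt (Sum.inr t) (Sum.inl p) :=
            Relation.TransGen.single (show B.flow (Sum.inr t) (Sum.inl p) from hpt)
          have hgt : gt t = t := (IH _ hlt).2 t rfl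
          have hbij := hg.post_bij t
          rw [hgt] at hbij
          have hmem : gp p ∈ B.post t := hbij.mapsTo hpt
          have hinj := (hB.hom.post_bij t).injOn
          exact hinj hmem hpt (congrFun hfp p)
        · have hinit : p ∈ B.init := by
            rw [hB.occ.init_eq]
            intro t ht
            exact hp ⟨t, ht⟩
          have hmem : gp p ∈ B.init := hg.init_bij.mapsTo hinit
          exact hB.hom.init_bij.injOn hmem hinit (congrFun hfp p)
      · rintro t rfl
        have hpre : ∀ q ∈ B.pre t, gp q = q := by
          intro q hq
          have hlt : B.lt (Sum.inl q) (Sum.inr t) :=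
            Relation.TransGen.single (show B.flow (Sum.inl q) (Sum.inr t) from hq)
          exact (IH _ hlt).1 q rfl
        have himg : B.pre (gt t) = B.pre t := by
          have := (hg.pre_bij t).image_eq
          rw [← this]
          apply Set.Subset.antisymm
          · rintro q ⟨q', hq', rfl⟩
            rw [hpre q' hq']; exact hq'
          · intro q hq
            exact ⟨q, hq, hpre q hq⟩
        exact hB.unique _ _ himg (congrFun hft t)
  exact ⟨fun p => (key (Sum.inl p)).1 p rfl, fun t => (key (Sum.inr t)).2 t rfl⟩

lemma netHom_comp {P₁ T₁ P₂ T₂ P₃ T₃ : Type}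
    {N₁ : PreNet P₁ T₁} {N₂ : PreNet P₂ T₂} {N₃ : PreNet P₃ T₃}
    {gp : P₁ → P₂} {gt : T₁ → T₂} {hp : P₂ → P₃} {ht : T₂ → T₃}
    (h₁ : IsNetHom N₁ N₂ gp gt) (h₂ : IsNetHom N₂ N₃ hp ht) :
    IsNetHom N₁ N₃ (hp ∘ gp) (ht ∘ gt) where
  pre_bij t := (h₂.pre_bij (gt t)).comp (h₁.pre_bij t)
  post_bij t := (h₂.post_bij (gt t)).comp (h₁.post_bij t)
  init_bij := h₂.init_bij.comp h₁.init_bij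

end Aux

/-- The subprocess relation `≤` on branching processes of a fixed
Petri net `N₀` is a partial order up to isomorphism: it is reflexive, transitive,
and antisymmetric up to isomorphism. -/
theorem subprocess_partial_order {P₀ T₀ : Type} (N₀ : PreNet P₀ T₀) :
    (∀ (P T : Type) (B : PreNet P T) (fp : P → P₀) (ft : T → T₀),
      IsBranchingProcess N₀ B fp ft → BPle B fp ft B fp ft) ∧
    (∀ (P₁ T₁ P₂ T₂ P₃ T₃ : Type)
       (B₁ : PreNet P₁ T₁) (fp₁ : P₁ → P₀) (ft₁ : T₁ → T₀)
       (B₂ : PreNet P₂ T₂) (fp₂ : P₂ → P₀) (ft₂ : T₂ → T₀)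
       (B₃ : PreNet P₃ T₃) (fp₃ : P₃ → P₀) (ft₃ : T₃ → T₀),
      IsBranchingProcess N₀ B₁ fp₁ ft₁ → IsBranchingProcess N₀ B₂ fp₂ ft₂ →
      IsBranchingProcess N₀ B₃ fp₃ ft₃ →
      BPle B₁ fp₁ ft₁ B₂ fp₂ ft₂ → BPle B₂ fp₂ ft₂ B₃ fp₃ ft₃ →
      BPle B₁ fp₁ ft₁ B₃ fp₃ ft₃) ∧
    (∀ (P₁ T₁ P₂ T₂ : Type)
       (B₁ : PreNet P₁ T₁) (fp₁ : P₁ → P₀) (ft₁ : T₁ → T₀)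
       (B₂ : PreNet P₂ T₂) (fp₂ : P₂ → P₀) (ft₂ : T₂ → T₀),
      IsBranchingProcess N₀ B₁ fp₁ ft₁ → IsBranchingProcess N₀ B₂ fp₂ ft₂ →
      BPle B₁ fp₁ ft₁ B₂ fp₂ ft₂ → BPle B₂ fp₂ ft₂ B₁ fp₁ ft₁ →
      BPEquiv B₁ fp₁ ft₁ B₂ fp₂ ft₂) := by
  refine ⟨?_, ?_, ?_⟩
  · intro P T B fp ft _
    exact ⟨id, id, ⟨fun t => (B.pre t).bijOn_id, fun t => (B.post t).bijOn_id,
      B.init.bijOn_id⟩, rfl, rfl, fun _ _ h => h, fun _ _ h => h⟩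
  · rintro P₁ T₁ P₂ T₂ P₃ T₃ B₁ fp₁ ft₁ B₂ fp₂ ft₂ B₃ fp₃ ft₃ _ _ _
      ⟨gp, gt, hg, hgp, hgt, hgpi, hgti⟩ ⟨hp, ht, hh, hhp, hht, hhpi, hhti⟩
    refine ⟨hp ∘ gp, ht ∘ gt, netHom_comp hg hh, ?_, ?_, hhpi.comp hgpi, hhti.comp hgti⟩
    · rw [← Function.comp_assoc, hhp, hgp]
    · rw [← Function.comp_assoc, hht, hgt]
  · rintro P₁ T₁ P₂ T₂ B₁ fp₁ ft₁ B₂ fp₂ ft₂ hB₁ hB₂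
      ⟨gp, gt, hg, hgp, hgt, hgpi, hgti⟩ ⟨hp, ht, hh, hhp, hht, hhpi, hhti⟩
    have e₂ : (∀ p, gp (hp p) = p) ∧ (∀ t, gt (ht t) = t) := by
      apply endo_id hB₂ (netHom_comp hh hg)
      · rw [← Function.comp_assoc, hgp, hhp]
      · rw [← Function.comp_assoc, hgt, hht]
    exact ⟨gp, gt, hg, hgp, hgt,
      ⟨hgpi, fun p => ⟨hp p, e₂.1 p⟩⟩, ⟨hgti, fun t => ⟨ht t, e₂.2 t⟩⟩⟩

end PG
end

section
/- (Correctness of the 3-SAT reduction.) Let F = (x¹₁ ∨ x¹₂ ∨ x¹₃) ∧ … ∧ (xⁿ₁ ∨ xⁿ₂ ∨ xⁿ₃) be a 3-CNF formula over variables x₁, …, x_m, each clause having exactly three literals. Let G_F be the 2-player Petri game in which all places are system places and there are no bad places besides the bad markings: one token moves through a sequence of n choice gadgets, in the i-th gadget branching to a place labelled x_i or a place labelled x̄_i and then rejoining; a second token moves through a sequence of n clause gadgets, in the i-th gadget branching to one of three places labelled by the literals xⁱ₁, xⁱ₂, xⁱ₃ of clause i and then rejoining; the bad markings are all pairs {x_k,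 xⁱ_j} with xⁱ_j = x̄_k and all pairs {x̄_k, xⁱ_j} with xⁱ_j = x_k. Then G_F has a winning strategy if and only if F is satisfiable. -/
namespace PG

/-- Places of the 3-SAT Petri game: the top token moves through `m` choice
gadgets (one per variable), the bottom token through `n` clause gadgets. -/
inductive SatPlace (n m : ℕ) : Type
  | topMid : Fin (m + 1) → SatPlace n m
  | topLit : Fin m → Bool → SatPlace n m
  | botMid : Fin (n + 1) → SatPlace n m
  | botLit : Fin n → Fin 3 → SatPlace n m

/-- Transitions of the 3-SAT Petri game. -/
inductive SatTrans (n m : ℕ) : Type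
  | topIn : Fin m → Bool → SatTrans n m
  | topOut : Fin m → Bool → SatTrans n m
  | botIn : Fin n → Fin 3 → SatTrans n m
  | botOut : Fin n → Fin 3 → SatTrans n m

/-- The underlying net of the 3-SAT Petri game. In the `i`-th choice gadget the
top token branches to the place labelled `x_i` (`b = true`) or `x̄_i`
(`b = false`) and rejoins; in the `i`-th clause gadget the bottom token branches
to one of the three literal places of clause `i` and rejoins. -/
def satNet (n m : ℕ) : PreNet (SatPlace n m) (SatTrans n m) where
  pre t :=
    match t with
    | SatTrans.topIn i _ => {SatPlace.topMid i.castSucc}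
    | SatTrans.topOut i b => {SatPlace.topLit i b}
    | SatTrans.botIn i _ => {SatPlace.botMid i.castSucc}
    | SatTrans.botOut i j => {SatPlace.botLit i j}
  post t :=
    match t with
    | SatTrans.topIn i b => {SatPlace.topLit i b}
    | SatTrans.topOut i _ => {SatPlace.topMid i.succ}
    | SatTrans.botIn i j => {SatPlace.botLit i j}
    | SatTrans.botOut i _ => {SatPlace.botMid i.succ}
  init := {SatPlace.topMid 0, SatPlace.botMid 0}

/-- The 3-SAT Petri game `G_F` of a 3-CNF formula `F` with `n` clauses over `m`
variables. A literal is a pair `(b, k) : Bool × Fin m` (`b = true` for the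
positive literal `x_k`, `b = false` for `x̄_k`). All places are system places.
The bad markings are all pairs `{x_k, xⁱ_j}` where the literal `xⁱ_j` of clause
`i` equals `x̄_k`, and all pairs `{x̄_k, xⁱ_j}` where `xⁱ_j = x_k`. -/
def satGame (n m : ℕ) (F : Fin n → Fin 3 → Bool × Fin m) :
    PetriGame (SatPlace n m) (SatTrans n m) where
  net := satNet n m
  system := Set.univ
  bad := {M | ∃ (i : Fin n) (j : Fin 3) (k : Fin m) (b : Bool),
    F i j = (!b, k) ∧ M = {SatPlace.topLit k b, SatPlace.botLit i j}}

/- ### Auxiliary material -/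

section Aux

variable {P T : Type}

lemma fires_append {N : PreNet P T} {M M' M'' : Set P} {l l' : List T}
    (h : N.Fires M l M') (h' : N.Fires M' l' M'') : N.Fires M (l ++ l') M'' := by
  induction h with
  | nil M => exact h'
  | cons he _ ih => exact PreNet.Fires.cons he (ih h')

lemma reachable_of_fires {N : PreNet P T} {M : Set P} {l : List T}
    (h : N.Fires N.init l M) : N.reachable M := ⟨l, h⟩

lemma pair_fire_left {α : Type*} {a b c : α} (h : b ≠ a) :
    (({a, b} : Set α) \ {a}) ∪ {c} = {c, b} := by
  ext x; simp only [Set.mem_union, Set.mem_diff, Set.mem_insert_iff, Set.mem_singleton_iff]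
  constructor
  · rintro (⟨(rfl | rfl), hx⟩ | rfl) <;> tauto
  · rintro (rfl | rfl) <;> tauto

lemma pair_fire_right {α : Type*} {a b c : α} (h : a ≠ b) :
    (({a, b} : Set α) \ {b}) ∪ {c} = {a, c} := by
  ext x; simp only [Set.mem_union, Set.mem_diff, Set.mem_insert_iff, Set.mem_singleton_iff]
  constructor
  · rintro (⟨(rfl | rfl), hx⟩ | rfl) <;> tauto
  · rintro (rfl | rfl) <;> tauto

lemma bijOn_singleton {α β : Type*} {f : α → β} {s : Set α} {x : β}
    (h : Set.BijOn f s {x}) : ∃ p, s = {p} ∧ f p = x := by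
  obtain ⟨p, hp, hfp⟩ := h.surjOn (Set.mem_singleton x)
  refine ⟨p, ?_, hfp⟩
  ext q
  constructor
  · intro hq
    have : f q = x := h.mapsTo hq
    exact h.injOn hq hp (this.trans hfp.symm)
  · rintro rfl; exact hp

lemma bijOn_val {α : Type*} {Q : α → Prop} {S : Set α} (h : ∀ x ∈ S, Q x) :
    Set.BijOn (Subtype.val : {x // Q x} → α) {p | p.1 ∈ S} S :=
  ⟨fun p hp => hp, Subtype.val_injective.injOn, fun x hx => ⟨⟨x, h x hx⟩, hx, rfl⟩⟩

end Aux

section SatAux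

/-- Top places. -/
def isTopP {n m : ℕ} : SatPlace n m → Prop
  | SatPlace.topMid _ => True
  | SatPlace.topLit _ _ => True
  | _ => False

/-- Bottom places. -/
def isBotP {n m : ℕ} : SatPlace n m → Prop
  | SatPlace.botMid _ => True
  | SatPlace.botLit _ _ => True
  | _ => False

/-- Progress rank of a bottom place. -/
def botRank {n m : ℕ} : SatPlace n m → ℕ
  | SatPlace.botMid c => 2 * c.val
  | SatPlace.botLit i _ => 2 * i.val + 1
  | _ => 0

/-- Progress rank of a top place. -/
def topRank {n m : ℕ} : SatPlace n m → ℕ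
  | SatPlace.topMid c => 2 * c.val
  | SatPlace.topLit i _ => 2 * i.val + 1
  | _ => 0

lemma ne_of_top_bot {n m : ℕ} {x y : SatPlace n m} (hx : isTopP x) (hy : isBotP y) :
    x ≠ y := by cases x <;> cases y <;> simp_all [isTopP, isBotP]

lemma botRank_le {n m : ℕ} {x : SatPlace n m} (hx : isBotP x) : botRank x ≤ 2 * n + 1 := by
  cases x with
  | botMid c => have := c.isLt; simp only [botRank]; omega
  | botLit i _ => have := i.isLt; simp only [botRank]; omega
  | _ => simp_all [isBotP]

lemma topRank_le {n m : ℕ} {x : SatPlace n m} (hx : isTopP x) : topRank x ≤ 2 * m + 1 := by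
  cases x with
  | topMid c => have := c.isLt; simp only [topRank]; omega
  | topLit i _ => have := i.isLt; simp only [topRank]; omega
  | _ => simp_all [isTopP]

instance {n m : ℕ} : Finite (SatPlace n m) := by
  have : Function.Surjective
      (fun x : (Fin (m+1) ⊕ (Fin m × Bool)) ⊕ (Fin (n+1) ⊕ (Fin n × Fin 3)) =>
        match x with
        | Sum.inl (Sum.inl i) => (SatPlace.topMid i : SatPlace n m)
        | Sum.inl (Sum.inr (i, b)) => SatPlace.topLit i b
        | Sum.inr (Sum.inl i) => SatPlace.botMid i
        | Sum.inr (Sum.inr (i, j)) => SatPlace.botLit i j) := by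
    intro p
    cases p with
    | topMid i => exact ⟨Sum.inl (Sum.inl i), rfl⟩
    | topLit i b => exact ⟨Sum.inl (Sum.inr (i, b)), rfl⟩
    | botMid i => exact ⟨Sum.inr (Sum.inl i), rfl⟩
    | botLit i j => exact ⟨Sum.inr (Sum.inr (i, j)), rfl⟩
  exact Finite.of_surjective _ this

instance {n m : ℕ} : Finite (SatTrans n m) := by
  have : Function.Surjective
      (fun x : (Fin m × Bool ⊕ Fin m × Bool) ⊕ (Fin n × Fin 3 ⊕ Fin n × Fin 3) =>
        match x with
        | Sum.inl (Sum.inl (i, b)) => (SatTrans.topIn i b : SatTrans n m)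
        | Sum.inl (Sum.inr (i, b)) => SatTrans.topOut i b
        | Sum.inr (Sum.inl (i, j)) => SatTrans.botIn i j
        | Sum.inr (Sum.inr (i, j)) => SatTrans.botOut i j) := by
    intro t
    cases t with
    | topIn i b => exact ⟨Sum.inl (Sum.inl (i, b)), rfl⟩
    | topOut i b => exact ⟨Sum.inl (Sum.inr (i, b)), rfl⟩
    | botIn i j => exact ⟨Sum.inr (Sum.inl (i, j)), rfl⟩
    | botOut i j => exact ⟨Sum.inr (Sum.inr (i, j)), rfl⟩
  exact Finite.of_surjective _ this

end SatAux

section Strat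

variable {n m : ℕ}

/-- Places allowed by the strategy determined by assignment `v` and clause choice `c`. -/
def stratP (v : Fin m → Bool) (c : Fin n → Fin 3) : SatPlace n m → Prop
  | SatPlace.topMid _ => True
  | SatPlace.topLit i b => b = v i
  | SatPlace.botMid _ => True
  | SatPlace.botLit i j => j = c i

/-- Transitions allowed by the strategy. -/
def stratT (v : Fin m → Bool) (c : Fin n → Fin 3) : SatTrans n m → Prop
  | SatTrans.topIn i b => b = v i
  | SatTrans.topOut i b => b = v i
  | SatTrans.botIn i j => j = c i
  | SatTrans.botOut i j => j = c i

/-- The strategy net: the restriction of `satNet` to allowed places/transitions. -/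
def stratNet (v : Fin m → Bool) (c : Fin n → Fin 3) :
    PreNet {p : SatPlace n m // stratP v c p} {t : SatTrans n m // stratT v c t} where
  pre t := {p | p.1 ∈ (satNet n m).pre t.1}
  post t := {p | p.1 ∈ (satNet n m).post t.1}
  init := {p | p.1 ∈ (satNet n m).init}

variable (v : Fin m → Bool) (c : Fin n → Fin 3)

lemma strat_pre_allowed : ∀ t : SatTrans n m, stratT v c t →
    ∀ x ∈ (satNet n m).pre t, stratP v c x := by
  intro t ht x hx
  cases t <;> simp_all [satNet, stratT, stratP]

lemma strat_post_allowed : ∀ t : SatTrans n m, stratT v c t →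
    ∀ x ∈ (satNet n m).post t, stratP v c x := by
  intro t ht x hx
  cases t <;> simp_all [satNet, stratT, stratP]

lemma strat_init_allowed : ∀ x ∈ (satNet n m).init, stratP v c x := by
  intro x hx
  rcases hx with rfl | rfl <;> trivial

/-- In the strategy, two transitions sharing a preset place are equal. -/
lemma strat_shared_pre (t₁ t₂ : {t : SatTrans n m // stratT v c t})
    (p : SatPlace n m) (h₁ : p ∈ (satNet n m).pre t₁.1) (h₂ : p ∈ (satNet n m).pre t₂.1) :
    t₁ = t₂ := by
  obtain ⟨t₁, ht₁⟩ := t₁; obtain ⟨t₂, ht₂⟩ := t₂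
  apply Subtype.ext
  cases t₁ <;> cases t₂ <;> simp_all [satNet, stratT] <;>
    (try subst h₁) <;> simp_all [stratT]

/-- In the strategy, two transitions sharing a postset place are equal. -/
lemma strat_shared_post (t₁ t₂ : {t : SatTrans n m // stratT v c t})
    (p : SatPlace n m) (h₁ : p ∈ (satNet n m).post t₁.1) (h₂ : p ∈ (satNet n m).post t₂.1) :
    t₁ = t₂ := by
  obtain ⟨t₁, ht₁⟩ := t₁; obtain ⟨t₂, ht₂⟩ := t₂
  apply Subtype.ext
  cases t₁ <;> cases t₂ <;> simp_all [satNet, stratT, Fin.succ_inj] <;>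
    (subst h₂; simp_all [stratT])

/-- A rank function on the nodes of `satNet`, strictly increasing along the flow. -/
def satRank : SatPlace n m ⊕ SatTrans n m → ℕ
  | Sum.inl (SatPlace.topMid i) => 4 * i.val
  | Sum.inl (SatPlace.topLit i _) => 4 * i.val + 2
  | Sum.inl (SatPlace.botMid i) => 4 * i.val
  | Sum.inl (SatPlace.botLit i _) => 4 * i.val + 2
  | Sum.inr (SatTrans.topIn i _) => 4 * i.val + 1
  | Sum.inr (SatTrans.topOut i _) => 4 * i.val + 3
  | Sum.inr (SatTrans.botIn i _) => 4 * i.val + 1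
  | Sum.inr (SatTrans.botOut i _) => 4 * i.val + 3

lemma strat_flow_rank (x y : {p : SatPlace n m // stratP v c p} ⊕ {t : SatTrans n m // stratT v c t})
    (h : (stratNet v c).flow x y) :
    satRank (Sum.map Subtype.val Subtype.val x) < satRank (Sum.map Subtype.val Subtype.val y) := by
  match x, y with
  | Sum.inl p, Sum.inl q => exact absurd h id
  | Sum.inr s, Sum.inr t => exact absurd h id
  | Sum.inl p, Sum.inr t =>
    have h' : p.1 ∈ (satNet n m).pre t.1 := h
    obtain ⟨t, ht⟩ := t
    obtain ⟨p, hp⟩ := p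
    cases t <;> simp_all [satNet] <;> subst h' <;> simp [satRank]
  | Sum.inr t, Sum.inl p =>
    have h' : p.1 ∈ (satNet n m).post t.1 := h
    obtain ⟨t, ht⟩ := t
    obtain ⟨p, hp⟩ := p
    cases t <;> simp_all [satNet] <;> subst h' <;> simp [satRank, Fin.val_succ] <;> omega

lemma setOf_val_mem_singleton {α : Type} {Q : α → Prop} {x : α} (h : Q x) :
    {p : {y // Q y} | p.1 ∈ ({x} : Set α)} = {⟨x, h⟩} := by
  ext q; simp [Subtype.ext_iff]

lemma strat_pre_eq (t : {t : SatTrans n m // stratT v c t}) :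
    ∃ p : {p : SatPlace n m // stratP v c p},
      (stratNet v c).pre t = {p} ∧ (satNet n m).pre t.1 = {p.1} := by
  obtain ⟨t, ht⟩ := t
  have : ∃ x, (satNet n m).pre t = {x} := by cases t <;> exact ⟨_, rfl⟩
  obtain ⟨x, hx⟩ := this
  have hQ : stratP v c x := strat_pre_allowed v c t ht x (by rw [hx]; rfl)
  refine ⟨⟨x, hQ⟩, ?_, hx⟩
  show {p : {p : SatPlace n m // stratP v c p} | p.1 ∈ (satNet n m).pre t} = _
  rw [hx]; exact setOf_val_mem_singleton hQ

lemma strat_winning (F : Fin n → Fin 3 → Bool × Fin m)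
    (hv : ∀ i : Fin n, (F i (c i)).1 = v (F i (c i)).2) :
    IsWinningStrategy (satGame n m F) (stratNet v c) Subtype.val Subtype.val := by
  have rank_mono : ∀ x y, Relation.TransGen (stratNet v c).flow x y →
      satRank (Sum.map Subtype.val Subtype.val x) < satRank (Sum.map Subtype.val Subtype.val y) := by
    intro x y h
    induction h with
    | single h => exact strat_flow_rank v c _ _ h
    | tail _ h ih => exact ih.trans (strat_flow_rank v c _ _ h)
  refine ⟨⟨⟨⟨?_, ?_, ?_⟩, ?_, ?_, ?_, ?_, ?_⟩, ⟨?_, ?_, ?_⟩, ?_⟩, ?_, ?_, ?_, ?_⟩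
  · -- pre_nonempty
    intro t
    obtain ⟨p, hp, -⟩ := strat_pre_eq v c t
    exact ⟨p, by rw [hp]; rfl⟩
  · exact fun t => Set.toFinite _
  · exact fun t => Set.toFinite _
  · -- acyclic
    intro x hx
    exact absurd (rank_mono x x hx) (lt_irrefl _)
  · exact fun x => Set.toFinite _
  · -- place_pre_subsingleton
    intro p t₁ h₁ t₂ h₂
    exact strat_shared_post v c t₁ t₂ p.1 h₁ h₂
  · -- no_self_conflict
    rintro t ⟨t₁, t₂, hne, ⟨p, hp₁, hp₂⟩, -, -⟩
    exact hne (strat_shared_pre v c t₁ t₂ p.1 hp₁ hp₂)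
  · -- init_eq
    ext q
    obtain ⟨p, hp⟩ := q
    show p ∈ (satNet n m).init ↔ _
    simp only [Set.mem_setOf_eq]
    constructor
    · rintro h ⟨t, ht⟩ hmem
      have hmem' : p ∈ (satNet n m).post t := hmem
      rcases h with rfl | rfl <;> cases t <;> simp_all [satNet] <;>
        exact Fin.succ_ne_zero _ hmem'.symm
    · intro h
      cases hp' : p with
      | topMid cc =>
        by_cases hc : cc = 0
        · subst hc hp'; left; rfl
        · exfalso
          have hcv : cc.val ≠ 0 := fun h0 => hc (Fin.ext h0)
          have hlt : cc.val - 1 < m := by have := cc.isLt; omega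
          have hcc : cc = (⟨cc.val - 1, hlt⟩ : Fin m).succ := by
            apply Fin.ext; simp [Fin.val_succ]; omega
          refine h ⟨SatTrans.topOut ⟨cc.val - 1, hlt⟩ (v ⟨cc.val - 1, hlt⟩), rfl⟩ ?_
          show p ∈ (satNet n m).post (SatTrans.topOut ⟨cc.val - 1, hlt⟩ (v ⟨cc.val - 1, hlt⟩))
          rw [hp']; exact Set.mem_singleton_iff.mpr (congrArg _ hcc)
      | topLit i b =>
        exfalso
        have hb : b = v i := by rw [hp'] at hp; exact hp
        refine h ⟨SatTrans.topIn i (v i), rfl⟩ ?_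
        show p ∈ (satNet n m).post (SatTrans.topIn i (v i))
        rw [hp', hb]; rfl
      | botMid cc =>
        by_cases hc : cc = 0
        · subst hc hp'; right; rfl
        · exfalso
          have hcv : cc.val ≠ 0 := fun h0 => hc (Fin.ext h0)
          have hlt : cc.val - 1 < n := by have := cc.isLt; omega
          have hcc : cc = (⟨cc.val - 1, hlt⟩ : Fin n).succ := by
            apply Fin.ext; simp [Fin.val_succ]; omega
          refine h ⟨SatTrans.botOut ⟨cc.val - 1, hlt⟩ (c ⟨cc.val - 1, hlt⟩), rfl⟩ ?_
          show p ∈ (satNet n m).post (SatTrans.botOut ⟨cc.val - 1, hlt⟩ (c ⟨cc.val - 1, hlt⟩))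
          rw [hp']; exact Set.mem_singleton_iff.mpr (congrArg _ hcc)
      | botLit i j =>
        exfalso
        have hb : j = c i := by rw [hp'] at hp; exact hp
        refine h ⟨SatTrans.botIn i (c i), rfl⟩ ?_
        show p ∈ (satNet n m).post (SatTrans.botIn i (c i))
        rw [hp', hb]; rfl
  · -- pre_bij
    exact fun t => bijOn_val (strat_pre_allowed v c t.1 t.2)
  · -- post_bij
    exact fun t => bijOn_val (strat_post_allowed v c t.1 t.2)
  · -- init_bij
    exact bijOn_val (strat_init_allowed v c)
  · -- unique
    exact fun t₁ t₂ _ h => Subtype.ext h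
  · -- justified refusal
    intro C hC t₀ himg hno
    have hx : ∃ x, (satNet n m).pre t₀ = {x} := by cases t₀ <;> exact ⟨_, rfl⟩
    obtain ⟨x, hx⟩ := hx
    have himg : Subtype.val '' C = {x} := by rw [himg]; exact hx
    have : x ∈ Subtype.val '' C := by rw [himg]; rfl
    obtain ⟨p, hpC, hpx⟩ := this
    refine ⟨p, hpC, Set.mem_univ _, ?_⟩
    rintro ⟨t, hpt, hft⟩
    apply hno
    refine ⟨t, hft, ?_⟩
    have hC : C = {p} := by
      ext q
      constructor
      · intro hq
        have : q.1 ∈ Subtype.val '' C := ⟨q, hq, rfl⟩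
        rw [himg] at this
        exact Subtype.ext (this.trans hpx.symm)
      · rintro rfl; exact hpC
    have hpp : p = (⟨x, hpx ▸ p.2⟩ : {p : SatPlace n m // stratP v c p}) := Subtype.ext hpx
    rw [hC, hpp]
    show {q : {p : SatPlace n m // stratP v c p} | q.1 ∈ (satNet n m).pre t.1} = _
    rw [hft, hx]
    exact setOf_val_mem_singleton _
  · -- safety
    rintro M hM ⟨i, j, k, b, hF, hM'⟩
    have h1 : SatPlace.topLit k b ∈ Subtype.val '' M := by rw [hM']; left; rfl
    have h2 : SatPlace.botLit i j ∈ Subtype.val '' M := by rw [hM']; right; rfl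
    obtain ⟨p, -, hp⟩ := h1
    obtain ⟨q, -, hq⟩ := h2
    have hb : b = v k := by have := p.2; rw [hp] at this; exact this
    have hj : j = c i := by have := q.2; rw [hq] at this; exact this
    have := hv i
    rw [← hj, hF, hb] at this
    simp at this
  · -- determinism
    rintro p - M - hpM t₁ ⟨h₁p, -⟩ t₂ ⟨h₂p, -⟩
    exact strat_shared_pre v c t₁ t₂ p.1 h₁p h₂p
  · -- deadlock avoidance
    rintro M hM ⟨t₀, ht₀⟩
    have key : ∀ (x : SatPlace n m), x ∈ Subtype.val '' M →
        ∀ (t : SatTrans n m) (ht : stratT v c t), (satNet n m).pre t = {x} →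
        ∃ t' : {t : SatTrans n m // stratT v c t}, (stratNet v c).enabled M t' := by
      rintro x ⟨p, hpM, hpx⟩ t ht hpre
      refine ⟨⟨t, ht⟩, ?_⟩
      intro q hq
      have : q.1 ∈ (satNet n m).pre t := hq
      rw [hpre] at this
      have : q = p := Subtype.ext (this.trans hpx.symm)
      rw [this]; exact hpM
    cases t₀ with
    | topIn i b =>
      have hm : SatPlace.topMid i.castSucc ∈ Subtype.val '' M := ht₀ rfl
      exact key _ hm (SatTrans.topIn i (v i)) rfl rfl
    | topOut i b =>
      have hm : SatPlace.topLit i b ∈ Subtype.val '' M := ht₀ rfl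
      obtain ⟨p, hpM, hp⟩ := hm
      have hb : b = v i := by have := p.2; rw [hp] at this; exact this
      exact key _ ⟨p, hpM, hp⟩ (SatTrans.topOut i b) hb rfl
    | botIn i j =>
      have hm : SatPlace.botMid i.castSucc ∈ Subtype.val '' M := ht₀ rfl
      exact key _ hm (SatTrans.botIn i (c i)) rfl rfl
    | botOut i j =>
      have hm : SatPlace.botLit i j ∈ Subtype.val '' M := ht₀ rfl
      obtain ⟨p, hpM, hp⟩ := hm
      have hb : j = c i := by have := p.2; rw [hp] at this; exact this
      exact key _ ⟨p, hpM, hp⟩ (SatTrans.botOut i j) hb rfl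

end Strat


section Extract

set_option maxHeartbeats 2000000 in
lemma winning_implies_sat (n m : ℕ) (F : Fin n → Fin 3 → Bool × Fin m)
    (h : HasWinningStrategy (satGame n m F)) :
    ∃ v : Fin m → Bool, ∀ i : Fin n, ∃ j : Fin 3, (F i j).1 = v (F i j).2 := by
  obtain ⟨P, T, N, fp, ft, hws⟩ := h
  -- singleton presets and postsets in the strategy
  have hpre : ∀ t : T, ∃ p, N.pre t = {p} ∧ (satNet n m).pre (ft t) = {fp p} := by
    intro t
    have hs : ∃ x, (satNet n m).pre (ft t) = {x} := by cases (ft t) <;> exact ⟨_, rfl⟩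
    obtain ⟨x, hx⟩ := hs
    have hb : Set.BijOn fp (N.pre t) ((satNet n m).pre (ft t)) := hws.isBP.hom.pre_bij t
    rw [hx] at hb
    obtain ⟨p, hp, hfp⟩ := bijOn_singleton hb
    exact ⟨p, hp, by rw [hx, hfp]⟩
  have hpost : ∀ t : T, ∃ p, N.post t = {p} ∧ (satNet n m).post (ft t) = {fp p} := by
    intro t
    have hs : ∃ x, (satNet n m).post (ft t) = {x} := by cases (ft t) <;> exact ⟨_, rfl⟩
    obtain ⟨x, hx⟩ := hs
    have hb : Set.BijOn fp (N.post t) ((satNet n m).post (ft t)) := hws.isBP.hom.post_bij t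
    rw [hx] at hb
    obtain ⟨p, hp, hfp⟩ := bijOn_singleton hb
    exact ⟨p, hp, by rw [hx, hfp]⟩
  -- the initial marking
  have hinit : ∃ pt0 pb0 : P, N.init = {pt0, pb0} ∧
      fp pt0 = SatPlace.topMid 0 ∧ fp pb0 = SatPlace.botMid 0 := by
    have hb : Set.BijOn fp N.init
        ({SatPlace.topMid 0, SatPlace.botMid 0} : Set (SatPlace n m)) := hws.isBP.hom.init_bij
    obtain ⟨pt0, hpt0, hfpt0⟩ := hb.surjOn (Set.mem_insert _ _)
    obtain ⟨pb0, hpb0, hfpb0⟩ := hb.surjOn (Set.mem_insert_of_mem _ rfl)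
    refine ⟨pt0, pb0, ?_, hfpt0, hfpb0⟩
    ext q
    constructor
    · intro hq
      have := hb.mapsTo hq
      simp only [Set.mem_insert_iff, Set.mem_singleton_iff] at this ⊢
      rcases this with h | h
      · exact Or.inl (hb.injOn hq hpt0 (h.trans hfpt0.symm))
      · exact Or.inr (hb.injOn hq hpb0 (h.trans hfpb0.symm))
    · rintro (rfl | rfl)
      · exact hpt0
      · exact hpb0
  obtain ⟨pt0, pb0, hinitE, hfpt0, hfpb0⟩ := hinit
  have htop0 : isTopP (fp pt0) := by rw [hfpt0]; trivial
  have hbot0 : isBotP (fp pb0) := by rw [hfpb0]; trivial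
  have hne : ∀ pt pb : P, isTopP (fp pt) → isBotP (fp pb) → pt ≠ pb :=
    fun pt pb h1 h2 he => ne_of_top_bot h1 h2 (congrArg fp he)
  have reach_fire : ∀ (M : Set P) (t : T), N.reachable M → N.enabled M t →
      N.reachable (N.fire M t) := by
    rintro M t ⟨l, hl⟩ he
    exact ⟨l ++ [t], fires_append hl (PreNet.Fires.cons he (PreNet.Fires.nil _))⟩
  -- single firing lemmas
  have fire_top : ∀ (pt pb pt' : P) (t : T), N.pre t = {pt} → N.post t = {pt'} → pt ≠ pb →
      N.Fires {pt, pb} [t] {pt', pb} := by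
    intro pt pb pt' t h1 h2 hnepb
    refine PreNet.Fires.cons ?_ ?_
    · show N.pre t ⊆ {pt, pb}
      rw [h1]; exact Set.singleton_subset_iff.mpr (Set.mem_insert _ _)
    · rw [PreNet.fire, h1, h2, pair_fire_left (Ne.symm hnepb)]
      exact PreNet.Fires.nil _
  have fire_bot : ∀ (pt pb pb' : P) (t : T), N.pre t = {pb} → N.post t = {pb'} → pt ≠ pb →
      N.Fires {pt, pb} [t] {pt, pb'} := by
    intro pt pb pb' t h1 h2 hnepb
    refine PreNet.Fires.cons ?_ ?_
    · show N.pre t ⊆ {pt, pb}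
      rw [h1]; exact Set.singleton_subset_iff.mpr (Set.mem_insert_of_mem _ rfl)
    · rw [PreNet.fire, h1, h2, pair_fire_right hnepb]
      exact PreNet.Fires.nil _
  -- progress: if the top token sits on a place from which `satNet` can move,
  -- the strategy contains a transition consuming that place
  have progress_top : ∀ (fuel : ℕ) (pt pb : P), N.reachable {pt, pb} → isTopP (fp pt) →
      isBotP (fp pb) → (∃ t₀ : SatTrans n m, (satNet n m).pre t₀ = {fp pt}) →
      2 * n + 2 - botRank (fp pb) ≤ fuel → ∃ t : T, N.pre t = {pt} := by
    intro fuel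
    induction fuel with
    | zero =>
      intro pt pb _ _ hbot _ hf
      have := botRank_le (n := n) (m := m) hbot
      omega
    | succ fuel ih =>
      intro pt pb hreach htop hbot hsat hf
      by_cases hstuck : ∃ tb : T, N.pre tb = {pb}
      · obtain ⟨tb, htb⟩ := hstuck
        obtain ⟨pb', hpb', hpost'⟩ := hpost tb
        obtain ⟨pp, hpp, hsatpre⟩ := hpre tb
        have hppb : pp = pb := Set.singleton_eq_singleton_iff.mp (hpp.symm.trans htb)
        rw [hppb] at hsatpre
        have hrank : isBotP (fp pb') ∧ botRank (fp pb) < botRank (fp pb') := by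
          cases hftb : ft tb with
          | topIn i b =>
            rw [hftb] at hsatpre
            have h1 : SatPlace.topMid i.castSucc = fp pb :=
              Set.singleton_eq_singleton_iff.mp hsatpre
            rw [← h1] at hbot
            simp [isBotP] at hbot
          | topOut i b =>
            rw [hftb] at hsatpre
            have h1 : SatPlace.topLit i b = fp pb :=
              Set.singleton_eq_singleton_iff.mp hsatpre
            rw [← h1] at hbot
            simp [isBotP] at hbot
          | botIn i j =>
            rw [hftb] at hsatpre hpost'
            have h1 : SatPlace.botMid i.castSucc = fp pb :=
              Set.singleton_eq_singleton_iff.mp hsatpre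
            have h2 : SatPlace.botLit i j = fp pb' :=
              Set.singleton_eq_singleton_iff.mp hpost'
            rw [← h1, ← h2]
            refine ⟨trivial, ?_⟩
            show 2 * (i.castSucc : ℕ) < 2 * (i : ℕ) + 1
            rw [Fin.coe_castSucc]
            omega
          | botOut i j =>
            rw [hftb] at hsatpre hpost'
            have h1 : SatPlace.botLit i j = fp pb :=
              Set.singleton_eq_singleton_iff.mp hsatpre
            have h2 : SatPlace.botMid i.succ = fp pb' :=
              Set.singleton_eq_singleton_iff.mp hpost'
            rw [← h1, ← h2]
            refine ⟨trivial, ?_⟩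
            show 2 * (i : ℕ) + 1 < 2 * (i.succ : ℕ)
            rw [Fin.val_succ]
            omega
        have henb : N.enabled {pt, pb} tb := by
          show N.pre tb ⊆ {pt, pb}
          rw [htb]; exact Set.singleton_subset_iff.mpr (Set.mem_insert_of_mem _ rfl)
        have hfire : N.fire {pt, pb} tb = {pt, pb'} := by
          rw [PreNet.fire, htb, hpb', pair_fire_right (hne pt pb htop hbot)]
        exact ih pt pb' (hfire ▸ reach_fire _ _ hreach henb) htop hrank.1 hsat (by omega)
      · obtain ⟨t₀, ht₀⟩ := hsat
        have henv : (satNet n m).pre t₀ ⊆ fp '' ({pt, pb} : Set P) := by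
          rw [ht₀]
          exact Set.singleton_subset_iff.mpr ⟨pt, Set.mem_insert _ _, rfl⟩
        have hDA := hws.deadlock_avoiding {pt, pb} hreach ⟨t₀, henv⟩
        obtain ⟨t, ht⟩ := hDA
        obtain ⟨pp, hpp, -⟩ := hpre t
        have hm : pp ∈ ({pt, pb} : Set P) := ht (by rw [hpp]; rfl)
        simp only [Set.mem_insert_iff, Set.mem_singleton_iff] at hm
        rcases hm with rfl | rfl
        · exact ⟨t, hpp⟩
        · exact absurd ⟨t, hpp⟩ hstuck
  have progress_bot : ∀ (fuel : ℕ) (pt pb : P), N.reachable {pt, pb} → isTopP (fp pt) →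
      isBotP (fp pb) → (∃ t₀ : SatTrans n m, (satNet n m).pre t₀ = {fp pb}) →
      2 * m + 2 - topRank (fp pt) ≤ fuel → ∃ t : T, N.pre t = {pb} := by
    intro fuel
    induction fuel with
    | zero =>
      intro pt pb _ htop _ _ hf
      have := topRank_le (n := n) (m := m) htop
      omega
    | succ fuel ih =>
      intro pt pb hreach htop hbot hsat hf
      by_cases hstuck : ∃ tt : T, N.pre tt = {pt}
      · obtain ⟨tt, htt⟩ := hstuck
        obtain ⟨pt', hpt', hpost'⟩ := hpost tt
        obtain ⟨pp, hpp, hsatpre⟩ := hpre tt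
        have hppt : pp = pt := Set.singleton_eq_singleton_iff.mp (hpp.symm.trans htt)
        rw [hppt] at hsatpre
        have hrank : isTopP (fp pt') ∧ topRank (fp pt) < topRank (fp pt') := by
          cases hftt : ft tt with
          | botIn i j =>
            rw [hftt] at hsatpre
            have h1 : SatPlace.botMid i.castSucc = fp pt :=
              Set.singleton_eq_singleton_iff.mp hsatpre
            rw [← h1] at htop
            simp [isTopP] at htop
          | botOut i j =>
            rw [hftt] at hsatpre
            have h1 : SatPlace.botLit i j = fp pt :=
              Set.singleton_eq_singleton_iff.mp hsatpre
            rw [← h1] at htop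
            simp [isTopP] at htop
          | topIn i b =>
            rw [hftt] at hsatpre hpost'
            have h1 : SatPlace.topMid i.castSucc = fp pt :=
              Set.singleton_eq_singleton_iff.mp hsatpre
            have h2 : SatPlace.topLit i b = fp pt' :=
              Set.singleton_eq_singleton_iff.mp hpost'
            rw [← h1, ← h2]
            refine ⟨trivial, ?_⟩
            show 2 * (i.castSucc : ℕ) < 2 * (i : ℕ) + 1
            rw [Fin.coe_castSucc]
            omega
          | topOut i b =>
            rw [hftt] at hsatpre hpost'
            have h1 : SatPlace.topLit i b = fp pt :=
              Set.singleton_eq_singleton_iff.mp hsatpre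
            have h2 : SatPlace.topMid i.succ = fp pt' :=
              Set.singleton_eq_singleton_iff.mp hpost'
            rw [← h1, ← h2]
            refine ⟨trivial, ?_⟩
            show 2 * (i : ℕ) + 1 < 2 * (i.succ : ℕ)
            rw [Fin.val_succ]
            omega
        have henb : N.enabled {pt, pb} tt := by
          show N.pre tt ⊆ {pt, pb}
          rw [htt]; exact Set.singleton_subset_iff.mpr (Set.mem_insert _ _)
        have hfire : N.fire {pt, pb} tt = {pt', pb} := by
          rw [PreNet.fire, htt, hpt', pair_fire_left (Ne.symm (hne pt pb htop hbot))]
        exact ih pt' pb (hfire ▸ reach_fire _ _ hreach henb) hrank.1 hbot hsat (by omega)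
      · obtain ⟨t₀, ht₀⟩ := hsat
        have henv : (satNet n m).pre t₀ ⊆ fp '' ({pt, pb} : Set P) := by
          rw [ht₀]
          exact Set.singleton_subset_iff.mpr ⟨pb, Set.mem_insert_of_mem _ rfl, rfl⟩
        have hDA := hws.deadlock_avoiding {pt, pb} hreach ⟨t₀, henv⟩
        obtain ⟨t, ht⟩ := hDA
        obtain ⟨pp, hpp, -⟩ := hpre t
        have hm : pp ∈ ({pt, pb} : Set P) := ht (by rw [hpp]; rfl)
        simp only [Set.mem_insert_iff, Set.mem_singleton_iff] at hm
        rcases hm with rfl | rfl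
        · exact absurd ⟨t, hpp⟩ hstuck
        · exact ⟨t, hpp⟩
  -- identifying transitions by the image of their preset
  have top_in_step : ∀ (i : Fin m) (pt : P) (t : T), N.pre t = {pt} →
      fp pt = SatPlace.topMid i.castSucc →
      ∃ (b : Bool) (pt' : P), ft t = SatTrans.topIn i b ∧ N.post t = {pt'} ∧
        fp pt' = SatPlace.topLit i b := by
    intro i pt t hpre_t hfpt
    obtain ⟨pp, hpp, hsat⟩ := hpre t
    have hppt : pp = pt := Set.singleton_eq_singleton_iff.mp (hpp.symm.trans hpre_t)
    rw [hppt] at hsat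
    obtain ⟨pt', hpt', hsat'⟩ := hpost t
    rw [hfpt] at hsat
    cases hftt : ft t with
    | topIn i' b =>
      rw [hftt] at hsat hsat'
      have h1 := Set.singleton_eq_singleton_iff.mp hsat
      have hii : i' = i := by
        injection h1 with h
        exact Fin.castSucc_injective _ h
      subst hii
      exact ⟨b, pt', rfl, hpt', (Set.singleton_eq_singleton_iff.mp hsat').symm⟩
    | topOut i' b =>
      rw [hftt] at hsat
      have := Set.singleton_eq_singleton_iff.mp hsat
      simp at this
    | botIn i' j =>
      rw [hftt] at hsat
      have := Set.singleton_eq_singleton_iff.mp hsat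
      simp at this
    | botOut i' j =>
      rw [hftt] at hsat
      have := Set.singleton_eq_singleton_iff.mp hsat
      simp at this
  have top_out_step : ∀ (i : Fin m) (b : Bool) (pt : P) (t : T), N.pre t = {pt} →
      fp pt = SatPlace.topLit i b →
      ∃ pt' : P, ft t = SatTrans.topOut i b ∧ N.post t = {pt'} ∧
        fp pt' = SatPlace.topMid i.succ := by
    intro i b pt t hpre_t hfpt
    obtain ⟨pp, hpp, hsat⟩ := hpre t
    have hppt : pp = pt := Set.singleton_eq_singleton_iff.mp (hpp.symm.trans hpre_t)
    rw [hppt] at hsat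
    obtain ⟨pt', hpt', hsat'⟩ := hpost t
    rw [hfpt] at hsat
    cases hftt : ft t with
    | topOut i' b' =>
      rw [hftt] at hsat hsat'
      have h1 := Set.singleton_eq_singleton_iff.mp hsat
      have hii : i' = i ∧ b' = b := by injection h1 with h h'; exact ⟨h, h'⟩
      obtain ⟨rfl, rfl⟩ := hii
      exact ⟨pt', rfl, hpt', (Set.singleton_eq_singleton_iff.mp hsat').symm⟩
    | topIn i' b' =>
      rw [hftt] at hsat
      have := Set.singleton_eq_singleton_iff.mp hsat
      simp at this
    | botIn i' j =>
      rw [hftt] at hsat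
      have := Set.singleton_eq_singleton_iff.mp hsat
      simp at this
    | botOut i' j =>
      rw [hftt] at hsat
      have := Set.singleton_eq_singleton_iff.mp hsat
      simp at this
  have bot_in_step : ∀ (i : Fin n) (pb : P) (t : T), N.pre t = {pb} →
      fp pb = SatPlace.botMid i.castSucc →
      ∃ (j : Fin 3) (pb' : P), ft t = SatTrans.botIn i j ∧ N.post t = {pb'} ∧
        fp pb' = SatPlace.botLit i j := by
    intro i pb t hpre_t hfpb
    obtain ⟨pp, hpp, hsat⟩ := hpre t
    have hppb : pp = pb := Set.singleton_eq_singleton_iff.mp (hpp.symm.trans hpre_t)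
    rw [hppb] at hsat
    obtain ⟨pb', hpb', hsat'⟩ := hpost t
    rw [hfpb] at hsat
    cases hftt : ft t with
    | botIn i' j =>
      rw [hftt] at hsat hsat'
      have h1 := Set.singleton_eq_singleton_iff.mp hsat
      have hii : i' = i := by
        injection h1 with h
        exact Fin.castSucc_injective _ h
      subst hii
      exact ⟨j, pb', rfl, hpb', (Set.singleton_eq_singleton_iff.mp hsat').symm⟩
    | botOut i' j =>
      rw [hftt] at hsat
      have := Set.singleton_eq_singleton_iff.mp hsat
      simp at this
    | topIn i' b =>
      rw [hftt] at hsat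
      have := Set.singleton_eq_singleton_iff.mp hsat
      simp at this
    | topOut i' b =>
      rw [hftt] at hsat
      have := Set.singleton_eq_singleton_iff.mp hsat
      simp at this
  have bot_out_step : ∀ (i : Fin n) (j : Fin 3) (pb : P) (t : T), N.pre t = {pb} →
      fp pb = SatPlace.botLit i j →
      ∃ pb' : P, ft t = SatTrans.botOut i j ∧ N.post t = {pb'} ∧
        fp pb' = SatPlace.botMid i.succ := by
    intro i j pb t hpre_t hfpb
    obtain ⟨pp, hpp, hsat⟩ := hpre t
    have hppb : pp = pb := Set.singleton_eq_singleton_iff.mp (hpp.symm.trans hpre_t)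
    rw [hppb] at hsat
    obtain ⟨pb', hpb', hsat'⟩ := hpost t
    rw [hfpb] at hsat
    cases hftt : ft t with
    | botOut i' j' =>
      rw [hftt] at hsat hsat'
      have h1 := Set.singleton_eq_singleton_iff.mp hsat
      have hii : i' = i ∧ j' = j := by injection h1 with h h'; exact ⟨h, h'⟩
      obtain ⟨rfl, rfl⟩ := hii
      exact ⟨pb', rfl, hpb', (Set.singleton_eq_singleton_iff.mp hsat').symm⟩
    | botIn i' j' =>
      rw [hftt] at hsat
      have := Set.singleton_eq_singleton_iff.mp hsat
      simp at this
    | topIn i' b =>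
      rw [hftt] at hsat
      have := Set.singleton_eq_singleton_iff.mp hsat
      simp at this
    | topOut i' b =>
      rw [hftt] at hsat
      have := Set.singleton_eq_singleton_iff.mp hsat
      simp at this
  -- the canonical top run
  have top_run : ∀ (k : ℕ) (hk : k ≤ m), ∃ (l : List T) (pt : P),
      fp pt = SatPlace.topMid ⟨k, by omega⟩ ∧
      ∀ pb, isBotP (fp pb) → N.Fires {pt0, pb} l {pt, pb} := by
    intro k
    induction k with
    | zero =>
      intro hk
      refine ⟨[], pt0, ?_, fun pb _ => PreNet.Fires.nil _⟩
      rw [hfpt0]; congr 1 <;> apply Fin.ext <;> simp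
    | succ k ih =>
      intro hk
      obtain ⟨l, pt, hpt, hfl⟩ := ih (by omega)
      have hkm : k < m := hk
      have hpt' : fp pt = SatPlace.topMid (⟨k, hkm⟩ : Fin m).castSucc := by
        rw [hpt]; congr 1 <;> apply Fin.ext <;> rfl
      have hreach : N.reachable {pt, pb0} := ⟨l, by rw [hinitE]; exact hfl pb0 hbot0⟩
      obtain ⟨t₁, ht₁⟩ := progress_top (2 * n + 2) pt pb0 hreach (by rw [hpt']; trivial)
        hbot0 ⟨SatTrans.topIn ⟨k, hkm⟩ true, by rw [hpt']; rfl⟩ (Nat.sub_le _ _)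
      obtain ⟨b, pt₁, hft₁, hpost₁, hfpt₁⟩ := top_in_step ⟨k, hkm⟩ pt t₁ ht₁ hpt'
      have hreach₁ : N.reachable {pt₁, pb0} := ⟨l ++ [t₁], by
        rw [hinitE]
        exact fires_append (hfl pb0 hbot0)
          (fire_top pt pb0 pt₁ t₁ ht₁ hpost₁ (hne _ _ (by rw [hpt']; trivial) hbot0))⟩
      obtain ⟨t₂, ht₂⟩ := progress_top (2 * n + 2) pt₁ pb0 hreach₁ (by rw [hfpt₁]; trivial)
        hbot0 ⟨SatTrans.topOut ⟨k, hkm⟩ b, by rw [hfpt₁]; rfl⟩ (Nat.sub_le _ _)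
      obtain ⟨pt₂, hft₂, hpost₂, hfpt₂⟩ := top_out_step ⟨k, hkm⟩ b pt₁ t₂ ht₂ hfpt₁
      refine ⟨l ++ [t₁] ++ [t₂], pt₂, ?_, ?_⟩
      · rw [hfpt₂]; congr 1 <;> apply Fin.ext <;> simp [Fin.val_succ]
      · intro pb hb
        exact fires_append
          (fires_append (hfl pb hb)
            (fire_top pt pb pt₁ t₁ ht₁ hpost₁ (hne _ _ (by rw [hpt']; trivial) hb)))
          (fire_top pt₁ pb pt₂ t₂ ht₂ hpost₂ (hne _ _ (by rw [hfpt₁]; trivial) hb))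
  -- the strategy's choice of literal in each choice gadget
  have top_lit : ∀ k : Fin m, ∃ (b : Bool) (l : List T) (pt : P),
      fp pt = SatPlace.topLit k b ∧
      ∀ pb, isBotP (fp pb) → N.Fires {pt0, pb} l {pt, pb} := by
    intro k
    obtain ⟨l, pt, hpt, hfl⟩ := top_run k.val (le_of_lt k.isLt)
    have hpt' : fp pt = SatPlace.topMid k.castSucc := by
      rw [hpt]; congr 1 <;> apply Fin.ext <;> rfl
    have hreach : N.reachable {pt, pb0} := ⟨l, by rw [hinitE]; exact hfl pb0 hbot0⟩
    obtain ⟨t₁, ht₁⟩ := progress_top (2 * n + 2) pt pb0 hreach (by rw [hpt']; trivial)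
      hbot0 ⟨SatTrans.topIn k true, by rw [hpt']; rfl⟩ (Nat.sub_le _ _)
    obtain ⟨b, pt₁, hft₁, hpost₁, hfpt₁⟩ := top_in_step k pt t₁ ht₁ hpt'
    refine ⟨b, l ++ [t₁], pt₁, hfpt₁, ?_⟩
    intro pb hb
    exact fires_append (hfl pb hb)
      (fire_top pt pb pt₁ t₁ ht₁ hpost₁ (hne _ _ (by rw [hpt']; trivial) hb))
  -- the canonical bottom run
  have bot_run : ∀ (k : ℕ) (hk : k ≤ n), ∃ (l : List T) (pb : P),
      fp pb = SatPlace.botMid ⟨k, by omega⟩ ∧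
      ∀ pt, isTopP (fp pt) → N.Fires {pt, pb0} l {pt, pb} := by
    intro k
    induction k with
    | zero =>
      intro hk
      refine ⟨[], pb0, ?_, fun pt _ => PreNet.Fires.nil _⟩
      rw [hfpb0]; congr 1 <;> apply Fin.ext <;> simp
    | succ k ih =>
      intro hk
      obtain ⟨l, pb, hpb, hfl⟩ := ih (by omega)
      have hkn : k < n := hk
      have hpb' : fp pb = SatPlace.botMid (⟨k, hkn⟩ : Fin n).castSucc := by
        rw [hpb]; congr 1 <;> apply Fin.ext <;> rfl
      have hreach : N.reachable {pt0, pb} := ⟨l, by rw [hinitE]; exact hfl pt0 htop0⟩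
      obtain ⟨t₁, ht₁⟩ := progress_bot (2 * m + 2) pt0 pb hreach htop0
        (by rw [hpb']; trivial) ⟨SatTrans.botIn ⟨k, hkn⟩ 0, by rw [hpb']; rfl⟩ (Nat.sub_le _ _)
      obtain ⟨j, pb₁, hft₁, hpost₁, hfpb₁⟩ := bot_in_step ⟨k, hkn⟩ pb t₁ ht₁ hpb'
      have hreach₁ : N.reachable {pt0, pb₁} := ⟨l ++ [t₁], by
        rw [hinitE]
        exact fires_append (hfl pt0 htop0)
          (fire_bot pt0 pb pb₁ t₁ ht₁ hpost₁ (hne _ _ htop0 (by rw [hpb']; trivial)))⟩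
      obtain ⟨t₂, ht₂⟩ := progress_bot (2 * m + 2) pt0 pb₁ hreach₁ htop0
        (by rw [hfpb₁]; trivial) ⟨SatTrans.botOut ⟨k, hkn⟩ j, by rw [hfpb₁]; rfl⟩ (Nat.sub_le _ _)
      obtain ⟨pb₂, hft₂, hpost₂, hfpb₂⟩ := bot_out_step ⟨k, hkn⟩ j pb₁ t₂ ht₂ hfpb₁
      refine ⟨l ++ [t₁] ++ [t₂], pb₂, ?_, ?_⟩
      · rw [hfpb₂]; congr 1 <;> apply Fin.ext <;> simp [Fin.val_succ]
      · intro pt htp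
        exact fires_append
          (fires_append (hfl pt htp)
            (fire_bot pt pb pb₁ t₁ ht₁ hpost₁ (hne _ _ htp (by rw [hpb']; trivial))))
          (fire_bot pt pb₁ pb₂ t₂ ht₂ hpost₂ (hne _ _ htp (by rw [hfpb₁]; trivial)))
  -- the strategy's choice of literal in each clause gadget
  have bot_lit : ∀ i : Fin n, ∃ (j : Fin 3) (l : List T) (pb : P),
      fp pb = SatPlace.botLit i j ∧
      ∀ pt, isTopP (fp pt) → N.Fires {pt, pb0} l {pt, pb} := by
    intro i
    obtain ⟨l, pb, hpb, hfl⟩ := bot_run i.val (le_of_lt i.isLt)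
    have hpb' : fp pb = SatPlace.botMid i.castSucc := by
      rw [hpb]; congr 1 <;> apply Fin.ext <;> rfl
    have hreach : N.reachable {pt0, pb} := ⟨l, by rw [hinitE]; exact hfl pt0 htop0⟩
    obtain ⟨t₁, ht₁⟩ := progress_bot (2 * m + 2) pt0 pb hreach htop0
      (by rw [hpb']; trivial) ⟨SatTrans.botIn i 0, by rw [hpb']; rfl⟩ (Nat.sub_le _ _)
    obtain ⟨j, pb₁, hft₁, hpost₁, hfpb₁⟩ := bot_in_step i pb t₁ ht₁ hpb'
    refine ⟨j, l ++ [t₁], pb₁, hfpb₁, ?_⟩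
    intro pt htp
    exact fires_append (hfl pt htp)
      (fire_bot pt pb pb₁ t₁ ht₁ hpost₁ (hne _ _ htp (by rw [hpb']; trivial)))
  -- the assignment extracted from the strategy
  refine ⟨fun k => (top_lit k).choose, ?_⟩
  intro i
  obtain ⟨j, lb, pb, hpb, hbf⟩ := bot_lit i
  refine ⟨j, ?_⟩
  obtain ⟨lt', pt, hpt, htf⟩ := (top_lit (F i j).2).choose_spec
  show (F i j).1 = (top_lit (F i j).2).choose
  generalize hB : (top_lit (F i j).2).choose = B at hpt ⊢
  have hreach : N.reachable {pt, pb} := ⟨lt' ++ lb, by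
    rw [hinitE]
    exact fires_append (htf pb0 hbot0) (hbf pt (by rw [hpt]; trivial))⟩
  have himg : fp '' {pt, pb} =
      {SatPlace.topLit (F i j).2 B, SatPlace.botLit i j} := by
    rw [Set.image_pair, hpt, hpb]
  have hsafe := hws.safety _ hreach
  by_contra hcon
  have hnb : (F i j).1 = !B := by
    rcases Bool.eq_false_or_eq_true (F i j).1 with h1 | h1 <;>
      rcases Bool.eq_false_or_eq_true B with h2 | h2 <;>
      simp_all
  exact hsafe ⟨i, j, (F i j).2, B, by rw [← hnb], himg⟩

end Extract

/-- (Correctness of the 3-SAT reduction.) The two-player Petri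
game `G_F` has a winning strategy if and only if the 3-CNF formula `F` is
satisfiable (a literal `(b, k)` is true under an assignment `v` iff `v k = b`). -/
theorem satReduction (n m : ℕ) (F : Fin n → Fin 3 → Bool × Fin m) :
    HasWinningStrategy (satGame n m F) ↔
    ∃ v : Fin m → Bool, ∀ i : Fin n, ∃ j : Fin 3, (F i j).1 = v (F i j).2 := by
  constructor
  · exact winning_implies_sat n m F
  · rintro ⟨v, hv⟩
    exact ⟨_, _, stratNet v (fun i => (hv i).choose), Subtype.val, Subtype.val,
      strat_winning v (fun i => (hv i).choose) F (fun i => (hv i).choose_spec)⟩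

end PG
end

section
/- (Pigeonhole for partial repetition cuts.) Let B be a branching process of a finite safe Petri net N₀ with T transitions, let R be a fixed set of places of B, and let t₁ < t₂ < … < t_m be causally ordered transitions of B such that lkc(t_i) \ post(t_i) = R for every i. If m > T, then there exist indices i < j with prc(t_i, t_j); in particular prc_loop(t_i, t_j) holds for this pair. -/
namespace PG

/-- In an occurrence net, the postset of a transition is contained in its last known cut. -/
lemma post_subset_lkc {P T : Type} {N : PreNet P T} (h : IsOccurrenceNet N) (t : T) :
    N.post t ⊆ lkc N t := by
  intro p hp
  refine ⟨fun hlt => h.acyclic (Sum.inr t) (Relation.TransGen.head (b := Sum.inl p) hp hlt),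
    fun t' ht' => ?_⟩
  have := h.place_pre_subsingleton p ht' hp
  subst this
  exact Relation.ReflTransGen.refl

/-- (Pigeonhole for partial repetition cuts.) Let `B` be a
branching process of a finite safe Petri net `N₀` with `|T₀|` transitions, `R` a
fixed set of places of `B`, and `t₁ < t₂ < … < t_m` causally ordered transitions
of `B` with `lkc(tᵢ) \ post(tᵢ) = R` for every `i`. If `m > |T₀|`, then there
exist `i < j` with `prc(tᵢ, tⱼ)`; in particular `prc_loop(tᵢ, tⱼ)` holds. -/
theorem prc_pigeonhole {P₀ T₀ P T : Type} [Finite P₀] [Finite T₀]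
    (N₀ : PreNet P₀ T₀) (hN₀ : IsPetriNet N₀) (hsafe : N₀.Safe)
    (N : PreNet P T) (fp : P → P₀) (ft : T → T₀)
    (hB : IsBranchingProcess N₀ N fp ft)
    (R : Set P) (m : ℕ) (t : Fin m → T)
    (hchain : ∀ i j : Fin m, i < j → N.lt (Sum.inr (t i)) (Sum.inr (t j)))
    (hR : ∀ i, lkc N (t i) \ N.post (t i) = R)
    (hm : Nat.card T₀ < m) :
    ∃ i j : Fin m, i < j ∧ prc N fp (t i) (t j) ∧ prcLoop N fp (t i) (t j) := by
  -- lkc (t i) = R ∪ post (t i)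
  have hlkc : ∀ i, lkc N (t i) = R ∪ N.post (t i) := by
    intro i
    rw [← hR i]
    rw [Set.diff_union_self, Set.union_eq_self_of_subset_right (post_subset_lkc hB.occ (t i))]
  -- lkm (t i) = fp '' R ∪ N₀.post (ft (t i))
  have hlkm : ∀ i, lkm N fp (t i) = fp '' R ∪ N₀.post (ft (t i)) := by
    intro i
    rw [lkm, hlkc i, Set.image_union, (hB.hom.post_bij (t i)).image_eq]
  -- pigeonhole on ft ∘ t
  have hninj : ¬ Function.Injective (fun i : Fin m => ft (t i)) := by
    intro hinj
    have := Nat.card_le_card_of_injective _ hinj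
    simp only [Nat.card_eq_fintype_card, Fintype.card_fin] at this
    omega
  simp only [Function.Injective, not_forall] at hninj
  obtain ⟨i, j, hij, hne⟩ := hninj
  have key : ∀ i j : Fin m, i < j → ft (t i) = ft (t j) →
      ∃ i' j' : Fin m, i' < j' ∧ prc N fp (t i') (t j') ∧ prcLoop N fp (t i') (t j') := by
    intro i j hlt heq
    have hprc : prc N fp (t i) (t j) := by
      constructor
      · rw [hlkm i, hlkm j, heq]
      · rw [hR i, hR j]
    exact ⟨i, j, hlt, hprc, hprc, hchain i j hlt⟩
  rcases lt_or_gt_of_ne hne with h | h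
  · exact key i j h hij
  · exact key j i h hij.symm

end PG
end
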